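/- arXiv:2209.06268 — 6 statements merged into one kernel-verified Lean document; each statement's English description precedes it below -/
import Mathlib

section
/- Let n ≥ 2 and let k, l be integers with 0 ≤ l < k ≤ n. Let λ ∈ ℝⁿ lie in the Gårding cone Γ_k and suppose S_k(λ)/C_n^k = S_l(λ)/C_n^l. Then (l+1) S_{l+1}(λ) S_k(λ) − (k+1) S_{k+1}(λ) S_l(λ) − (k−l) S_k(λ) S_l(λ) ≥ 0, where S_{n+1}(λ) := 0 when k = n. -/
open scoped BigOperators

noncomputable section

/-- The k-th elementary symmetric polynomial of `λ ∈ ℝⁿ`; by definition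
`Svec n m λ = 0` for `m > n` and `Svec n 0 λ = 1`. -/
def Svec (n k : ℕ) (lam : Fin n → ℝ) : ℝ :=
  ∑ s ∈ Finset.powersetCard k (Finset.univ : Finset (Fin n)), ∏ i ∈ s, lam i

/-- Integer-indexed version, with the convention `S_m = 0` for `m < 0`. -/
def SvecZ (n : ℕ) (k : ℤ) (lam : Fin n → ℝ) : ℝ :=
  if 0 ≤ k then Svec n k.toNat lam else 0

/-- The Gårding cone `Γ_k = {λ : S_1(λ) > 0, …, S_k(λ) > 0}`. -/
def GardingCone (n k : ℕ) : Set (Fin n → ℝ) :=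
  {lam | ∀ i : ℕ, 1 ≤ i → i ≤ k → 0 < Svec n i lam}

namespace NewtonAux

open Polynomial Finset

/-- Normalized elementary symmetric function of a multiset. -/
def msp (s : Multiset ℝ) (j : ℕ) : ℝ :=
  s.esymm j / ((Multiset.card s).choose j : ℝ)

lemma offDiag_sum {α : Type*} [DecidableEq α] (s : Finset α) (f : α → ℝ) :
    ∑ p ∈ s.offDiag, f p.1 * f p.2 = (∑ i ∈ s, f i) ^ 2 - ∑ i ∈ s, f i ^ 2 := by
  have h1 : ∑ p ∈ s.diag, f p.1 * f p.2 + ∑ p ∈ s.offDiag, f p.1 * f p.2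
      = ∑ p ∈ s ×ˢ s, f p.1 * f p.2 := by
    rw [← Finset.sum_union (Finset.disjoint_diag_offDiag s), Finset.diag_union_offDiag]
  have h2 : ∑ p ∈ s ×ˢ s, f p.1 * f p.2 = (∑ i ∈ s, f i) ^ 2 := by
    rw [Finset.sum_product, sq, Finset.sum_mul_sum]
  have h3 : ∑ p ∈ s.diag, f p.1 * f p.2 = ∑ i ∈ s, f i ^ 2 := by
    rw [Finset.sum_diag]; exact Finset.sum_congr rfl fun i _ => (sq (f i)).symm
  linarith

lemma Svec_zero (n : ℕ) (lam : Fin n → ℝ) : Svec n 0 lam = 1 := by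
  simp [Svec]

lemma Svec_one (n : ℕ) (lam : Fin n → ℝ) : Svec n 1 lam = ∑ i, lam i := by
  simp [Svec, Finset.powersetCard_one, Finset.sum_map]

lemma Svec_two (n : ℕ) (lam : Fin n → ℝ) :
    2 * Svec n 2 lam = (∑ i, lam i) ^ 2 - ∑ i, lam i ^ 2 := by
  rw [← offDiag_sum Finset.univ lam]
  have hcover : (Finset.univ : Finset (Fin n)).offDiag
      = (Finset.powersetCard 2 (Finset.univ : Finset (Fin n))).biUnion (fun u => u.offDiag) := by
    ext p
    constructor
    · intro hp
      have hij := (Finset.mem_offDiag.mp hp).2.2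
      exact Finset.mem_biUnion.mpr ⟨{p.1, p.2},
        Finset.mem_powersetCard_univ.mpr (Finset.card_pair hij),
        Finset.mem_offDiag.mpr ⟨by simp, by simp, hij⟩⟩
    · intro hp
      obtain ⟨u, -, hpu⟩ := Finset.mem_biUnion.mp hp
      exact Finset.mem_offDiag.mpr
        ⟨Finset.mem_univ _, Finset.mem_univ _, (Finset.mem_offDiag.mp hpu).2.2⟩
  have hdisj : (↑(Finset.powersetCard 2 (Finset.univ : Finset (Fin n))) :
      Set (Finset (Fin n))).PairwiseDisjoint (fun u => u.offDiag) := by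
    intro u hu v hv huv
    rw [Finset.mem_coe] at hu hv
    simp only [Function.onFun]
    rw [Finset.disjoint_left]
    intro p hpu hpv
    rw [Finset.mem_offDiag] at hpu hpv
    have hu2 : u = {p.1, p.2} := by
      refine (Finset.eq_of_subset_of_card_le ?_ ?_).symm
      · intro x hx
        rcases Finset.mem_insert.mp hx with rfl | hx
        · exact hpu.1
        · rw [Finset.mem_singleton.mp hx]; exact hpu.2.1
      · rw [Finset.mem_powersetCard_univ.mp hu]
        exact (Finset.card_pair hpu.2.2).ge
    have hv2 : v = {p.1, p.2} := by
      refine (Finset.eq_of_subset_of_card_le ?_ ?_).symm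
      · intro x hx
        rcases Finset.mem_insert.mp hx with rfl | hx
        · exact hpv.1
        · rw [Finset.mem_singleton.mp hx]; exact hpv.2.1
      · rw [Finset.mem_powersetCard_univ.mp hv]
        exact (Finset.card_pair hpv.2.2).ge
    exact huv (hu2.trans hv2.symm)
  rw [hcover, Finset.sum_biUnion hdisj, Svec, Finset.mul_sum]
  refine Finset.sum_congr rfl ?_
  intro u hu
  obtain ⟨a, b, hab, rfl⟩ := Finset.card_eq_two.mp (Finset.mem_powersetCard_univ.mp hu)
  rw [offDiag_sum, Finset.sum_pair hab, Finset.sum_pair hab, Finset.prod_pair hab]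
  ring

lemma Svec_top (n : ℕ) (lam : Fin n → ℝ) : Svec n n lam = ∏ i, lam i := by
  have h := Finset.powersetCard_self (Finset.univ : Finset (Fin n))
  rw [Finset.card_univ, Fintype.card_fin] at h
  rw [Svec, h, Finset.sum_singleton]

lemma Svec_compl (n j : ℕ) (hj : j ≤ n) (lam : Fin n → ℝ) (h0 : ∀ i, lam i ≠ 0) :
    Svec n (n - j) lam = Svec n j (fun i => (lam i)⁻¹) * ∏ i, lam i := by
  rw [Svec, Svec, Finset.sum_mul]
  refine Finset.sum_nbij' (fun u => uᶜ) (fun v => vᶜ) ?_ ?_ ?_ ?_ ?_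
  · intro u hu
    rw [Finset.mem_powersetCard_univ] at hu ⊢
    rw [Finset.card_compl, hu, Fintype.card_fin]
    omega
  · intro v hv
    rw [Finset.mem_powersetCard_univ] at hv ⊢
    rw [Finset.card_compl, hv, Fintype.card_fin]
  · intro u _; exact compl_compl u
  · intro v _; exact compl_compl v
  · intro u _
    have hprod : (∏ i ∈ u, lam i) * ∏ i ∈ uᶜ, lam i = ∏ i, lam i :=
      Finset.prod_mul_prod_compl u lam
    have hne : (∏ i ∈ uᶜ, lam i) ≠ 0 := Finset.prod_ne_zero_iff.mpr fun i _ => h0 i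
    rw [Finset.prod_inv_distrib, ← hprod, mul_comm (∏ i ∈ u, lam i) (∏ i ∈ uᶜ, lam i),
      inv_mul_cancel_left₀ hne]

/-- The base case of Newton's inequality: the top-index case, proved via inversion and
Cauchy–Schwarz. -/
lemma newton_base (n : ℕ) (hn : 2 ≤ n) (lam : Fin n → ℝ) :
    2 * (n : ℝ) ^ 2 * (Svec n (n - 2) lam * Svec n n lam)
      ≤ (n : ℝ) * ((n : ℝ) - 1) * Svec n (n - 1) lam ^ 2 := by
  have hn1 : (1 : ℝ) ≤ (n : ℝ) := by exact_mod_cast Nat.one_le_of_lt hn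
  by_cases h0 : ∀ i, lam i ≠ 0
  · set μ : Fin n → ℝ := fun i => (lam i)⁻¹ with hμ
    set Q : ℝ := ∏ i, lam i with hQ
    have e2 : Svec n (n - 2) lam = Svec n 2 μ * Q := Svec_compl n 2 (by omega) lam h0
    have e1 : Svec n (n - 1) lam = Svec n 1 μ * Q := Svec_compl n 1 (by omega) lam h0
    have e0 : Svec n n lam = Q := Svec_top n lam
    set A : ℝ := ∑ i, μ i with hA
    set B : ℝ := ∑ i, μ i ^ 2 with hB
    have hCS : A ^ 2 ≤ (n : ℝ) * B := by
      have := sq_sum_le_card_mul_sum_sq (s := (Finset.univ : Finset (Fin n))) (f := μ)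
      simpa [Finset.card_univ] using this
    have h2 : 2 * Svec n 2 μ = A ^ 2 - B := Svec_two n μ
    have h1 : Svec n 1 μ = A := Svec_one n μ
    rw [e2, e1, e0, h1]
    have hkey : (n : ℝ) * ((n : ℝ) - 1) * (A * Q) ^ 2 - 2 * (n : ℝ) ^ 2 * (Svec n 2 μ * Q * Q)
        = ((n : ℝ) * ((n : ℝ) * B - A ^ 2)) * Q ^ 2 := by
      linear_combination (- (n : ℝ) ^ 2 * Q ^ 2) * h2
    nlinarith [mul_nonneg (mul_nonneg (by linarith : (0:ℝ) ≤ (n:ℝ))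
      (by linarith : (0:ℝ) ≤ (n : ℝ) * B - A ^ 2)) (sq_nonneg Q)]
  · push_neg at h0
    obtain ⟨i, hi⟩ := h0
    have : Svec n n lam = 0 := by
      rw [Svec_top]
      exact Finset.prod_eq_zero (Finset.mem_univ i) hi
    rw [this, mul_zero, mul_zero]
    exact mul_nonneg (mul_nonneg (by linarith) (by linarith)) (sq_nonneg _)

lemma choose_aux (N j : ℕ) (hN : 1 ≤ N) : N * (N - 1).choose j = (N - j) * N.choose j := by
  rcases le_or_gt j (N - 1) with hj | hj
  · have h1 : N - 1 + 1 = N := by omega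
    have h2 := Nat.add_one_mul_choose_eq (N - 1) j
    rw [h1] at h2
    rw [h2, Nat.choose_succ_right_eq, mul_comm]
  · have h1 : (N - 1).choose j = 0 := Nat.choose_eq_zero_of_lt (by omega)
    rcases le_or_gt j N with hjN | hjN
    · have : j = N := by omega
      subst this
      simp [h1]
    · rw [h1, Nat.choose_eq_zero_of_lt hjN]; ring

/-- Newton's inequality for multisets of reals. -/
lemma newton_ms (N : ℕ) : ∀ (s : Multiset ℝ), Multiset.card s = N → ∀ m : ℕ,
    msp s m * msp s (m + 2) ≤ msp s (m + 1) ^ 2 := by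
  induction N using Nat.strong_induction_on with
  | _ N ih =>
  intro s hs m
  rcases lt_or_ge N (m + 2) with hN | hN
  · have h0 : N.choose (m + 2) = 0 := Nat.choose_eq_zero_of_lt hN
    simp only [msp, hs, h0, Nat.cast_zero, div_zero, mul_zero]
    positivity
  rcases eq_or_lt_of_le hN with hNe | hNlt
  · -- base case: N = m + 2
    -- convert the multiset into a vector
    set l : List ℝ := s.toList with hl
    set n : ℕ := l.length with hn
    set lam : Fin n → ℝ := fun i => l.get i with hlam
    have hmap : Multiset.map lam Finset.univ.val = s := by
      rw [Fin.univ_val_map]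
      have : List.ofFn lam = l := List.ofFn_get l
      rw [this, hl, Multiset.coe_toList]
    have hcard : n = N := by
      rw [hn, ← hs, ← Multiset.coe_card, hl, Multiset.coe_toList]
    have hesymm : ∀ j, s.esymm j = Svec n j lam := by
      intro j
      rw [← hmap, Finset.esymm_map_val]
      rfl
    have hnm : n = m + 2 := by omega
    have hn2 : 2 ≤ n := by omega
    have hbase := newton_base n hn2 lam
    have hmsp : ∀ j, msp s j = Svec n j lam / (n.choose j : ℝ) := by
      intro j
      rw [msp, hs, ← hcard, hesymm]
    rw [hmsp, hmsp, hmsp, show m = n - 2 from by omega, show n - 2 + 1 = n - 1 from by omega,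
      show n - 2 + 2 = n from by omega]
    have hch1 : n.choose (n - 1) = n := by
      have h := Nat.choose_symm (show 1 ≤ n by omega)
      rw [Nat.choose_one_right] at h
      exact h
    have hch2 : 2 * n.choose (n - 2) = n * (n - 1) := by
      have hsym := Nat.choose_symm (show 2 ≤ n by omega)
      rw [hsym, Nat.choose_two_right]
      have hev : 2 ∣ n * (n - 1) := by
        rcases Nat.even_or_odd n with he | ho
        · exact Dvd.dvd.mul_right he.two_dvd _
        · have : Even (n - 1) := Nat.Odd.sub_odd ho odd_one
          exact Dvd.dvd.mul_left this.two_dvd _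
      exact Nat.mul_div_cancel' hev
    have hC2pos : (0:ℝ) < (n.choose (n - 2) : ℝ) := by
      exact_mod_cast Nat.choose_pos (show n - 2 ≤ n by omega)
    have hnRpos : (0:ℝ) < (n:ℝ) := by exact_mod_cast (by omega : 0 < n)
    have h2C : 2 * ((n.choose (n - 2) : ℕ) : ℝ) = (n:ℝ) * ((n:ℝ) - 1) := by
      have hc := congrArg (Nat.cast : ℕ → ℝ) hch2
      push_cast [Nat.cast_sub (show 1 ≤ n by omega)] at hc
      linarith
    rw [Nat.choose_self, hch1, Nat.cast_one, div_one]
    rw [div_mul_eq_mul_div, div_pow, div_le_div_iff₀ hC2pos (by positivity)]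
    have h3 : (n:ℝ) * ((n:ℝ) - 1) * Svec n (n - 1) lam ^ 2
        = 2 * ((n.choose (n - 2) : ℕ) : ℝ) * Svec n (n - 1) lam ^ 2 := by
      rw [h2C]
    nlinarith [hbase, h3]
  · -- inductive step: N ≥ m + 3, use the derivative
    have hN1 : 1 ≤ N := by omega
    set f : Polynomial ℝ := (s.map fun a => Polynomial.X - Polynomial.C a).prod with hf
    have hmonic : f.Monic :=
      Polynomial.monic_multiset_prod_of_monic _ _ fun a _ => Polynomial.monic_X_sub_C a
    have hfdeg : f.natDegree = N := by
      rw [hf, Polynomial.natDegree_multiset_prod_X_sub_C_eq_card, hs]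
    have hfroots : f.roots = s := Polynomial.roots_multiset_prod_X_sub_C s
    set g := Polynomial.derivative f with hg
    have hNcast : ((N - 1 : ℕ) : ℝ) + 1 = (N : ℝ) := by
      rw [Nat.cast_sub hN1]
      push_cast
      ring
    have hgtop : g.coeff (N - 1) = (N : ℝ) := by
      rw [hg, Polynomial.coeff_derivative, show N - 1 + 1 = N from by omega]
      have hc : f.coeff N = 1 := by
        rw [← hfdeg]
        exact hmonic.coeff_natDegree
      rw [hc, one_mul, hNcast]
    have hNne : (N:ℝ) ≠ 0 := by exact_mod_cast (by omega : N ≠ 0)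
    have hgne : g ≠ 0 := by
      intro h
      rw [h, Polynomial.coeff_zero] at hgtop
      exact hNne hgtop.symm
    have hgdeg : g.natDegree = N - 1 := by
      have hle : g.natDegree ≤ N - 1 := by
        have := Polynomial.natDegree_derivative_le f
        rwa [hfdeg] at this
      have hge : N - 1 ≤ g.natDegree :=
        Polynomial.le_natDegree_of_ne_zero (by rw [hgtop]; exact hNne)
      omega
    set t := g.roots with ht
    have hgroots : Multiset.card t = N - 1 := by
      have hle : Multiset.card t ≤ N - 1 := by
        have := g.card_roots' 
        rwa [hgdeg] at this
      have hge : N ≤ Multiset.card t + 1 := by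
        have := f.card_roots_le_derivative
        rwa [hfroots, hs] at this
      omega
    have hlead : g.leadingCoeff = (N:ℝ) := by
      rw [Polynomial.leadingCoeff, hgdeg, hgtop]
    have hesymm_t : ∀ j, j ≤ N - 1 → (N:ℝ) * t.esymm j = ((N:ℝ) - j) * s.esymm j := by
      intro j hj
      have hcast_j : ((N - 1 - j : ℕ) : ℝ) = (N:ℝ) - 1 - (j:ℝ) := by
        rw [Nat.cast_sub hj, Nat.cast_sub hN1, Nat.cast_one]
      have hc1 : g.coeff (N - 1 - j) = (N:ℝ) * ((-1:ℝ)^j * t.esymm j) := by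
        have h := Polynomial.coeff_eq_esymm_roots_of_card
          (p := g) (by rw [hgroots, hgdeg]) (k := N - 1 - j) (by rw [hgdeg]; omega)
        rw [hgdeg, show N - 1 - (N - 1 - j) = j from by omega, hlead] at h
        rw [h]; ring
      have hcf : f.coeff (N - j) = (-1:ℝ)^j * s.esymm j := by
        have h := Multiset.prod_X_sub_C_coeff s
          (show N - j ≤ Multiset.card s from by rw [hs]; omega)
        rw [hs, show N - (N - j) = j from by omega] at h
        exact h
      have hc2 : g.coeff (N - 1 - j) = ((N:ℝ) - j) * ((-1:ℝ)^j * s.esymm j) := by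
        rw [hg, Polynomial.coeff_derivative, show N - 1 - j + 1 = N - j from by omega, hcf,
          hcast_j]
        ring
      have hcomb : ((-1:ℝ))^j * ((N:ℝ) * t.esymm j) = ((-1:ℝ))^j * (((N:ℝ) - j) * s.esymm j) := by
        have := hc1.symm.trans hc2
        linear_combination this
      exact mul_left_cancel₀ (pow_ne_zero _ (by norm_num : (-1:ℝ) ≠ 0)) hcomb
    have hmsp_eq : ∀ j, j ≤ N - 1 → msp t j = msp s j := by
      intro j hj
      have hcR : (N:ℝ) * ((N-1).choose j : ℝ) = ((N:ℝ) - j) * (N.choose j : ℝ) := by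
        have hc := congrArg (Nat.cast : ℕ → ℝ) (choose_aux N j hN1)
        push_cast [Nat.cast_sub (show j ≤ N by omega)] at hc
        exact hc
      have hd1 : (((N-1).choose j : ℕ) : ℝ) ≠ 0 := by
        exact_mod_cast (Nat.choose_pos hj).ne'
      have hd2 : ((N.choose j : ℕ) : ℝ) ≠ 0 := by
        exact_mod_cast (Nat.choose_pos (show j ≤ N by omega)).ne'
      rw [msp, msp, hgroots, hs, div_eq_div_iff hd1 hd2]
      apply mul_left_cancel₀ hNne
      calc (N:ℝ) * (t.esymm j * ((N.choose j : ℕ) : ℝ))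
          = ((N:ℝ) * t.esymm j) * ((N.choose j : ℕ) : ℝ) := by ring
        _ = (((N:ℝ) - j) * s.esymm j) * ((N.choose j : ℕ) : ℝ) := by rw [hesymm_t j hj]
        _ = s.esymm j * (((N:ℝ) - j) * ((N.choose j : ℕ) : ℝ)) := by ring
        _ = s.esymm j * ((N:ℝ) * (((N-1).choose j : ℕ) : ℝ)) := by rw [← hcR]
        _ = (N:ℝ) * (s.esymm j * (((N-1).choose j : ℕ) : ℝ)) := by ring
    have hIH := ih (N - 1) (by omega) t hgroots m
    rw [hmsp_eq m (by omega), hmsp_eq (m+1) (by omega), hmsp_eq (m+2) (by omega)] at hIH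
    exact hIH

/-- Newton's inequality for vectors. -/
lemma newton_vec (n : ℕ) (lam : Fin n → ℝ) (m : ℕ) :
    (Svec n m lam / (n.choose m : ℝ)) * (Svec n (m + 2) lam / (n.choose (m + 2) : ℝ))
      ≤ (Svec n (m + 1) lam / (n.choose (m + 1) : ℝ)) ^ 2 := by
  set s : Multiset ℝ := Multiset.map lam Finset.univ.val with hsdef
  have hcard : Multiset.card s = n := by
    rw [hsdef, Multiset.card_map]
    exact congrArg Finset.card (rfl : (Finset.univ : Finset (Fin n)) = Finset.univ) |>.trans
      (Finset.card_univ.trans (Fintype.card_fin n))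
  have hesymm : ∀ j, s.esymm j = Svec n j lam := by
    intro j
    rw [hsdef, Finset.esymm_map_val]
    rfl
  have h := newton_ms n s hcard m
  rw [msp, msp, msp, hcard, hesymm, hesymm, hesymm] at h
  exact h

end NewtonAux

/-- If `λ ∈ Γ_k` and `S_k(λ)/C_n^k = S_l(λ)/C_n^l`, then
`(l+1) S_{l+1} S_k − (k+1) S_{k+1} S_l − (k−l) S_k S_l ≥ 0`. -/
theorem newton_maclaurin_consequence
    (n k l : ℕ) (hn : 2 ≤ n) (hlk : l < k) (hkn : k ≤ n)
    (lam : Fin n → ℝ) (hlam : lam ∈ GardingCone n k)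
    (heq : Svec n k lam / (n.choose k : ℝ) = Svec n l lam / (n.choose l : ℝ)) :
    0 ≤ ((l : ℝ) + 1) * Svec n (l + 1) lam * Svec n k lam
      - ((k : ℝ) + 1) * Svec n (k + 1) lam * Svec n l lam
      - ((k : ℝ) - l) * Svec n k lam * Svec n l lam := by
  classical
  set p : ℕ → ℝ := fun j => Svec n j lam / (n.choose j : ℝ) with hp
  have hp_pos : ∀ j, j ≤ k → 0 < p j := by
    intro j hj
    rcases Nat.eq_zero_or_pos j with rfl | hj1
    · have h0 : Svec n 0 lam = 1 := NewtonAux.Svec_zero n lam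
      simp only [hp, h0, Nat.choose_zero_right, Nat.cast_one, div_one]
      norm_num
    · have hnum := hlam j hj1 hj
      have hden : (0:ℝ) < (n.choose j : ℝ) := by
        exact_mod_cast Nat.choose_pos (le_trans hj hkn)
      exact div_pos hnum hden
  have hNewton : ∀ j : ℕ, p j * p (j + 2) ≤ p (j + 1) ^ 2 := fun j =>
    NewtonAux.newton_vec n lam j
  have heq' : p k = p l := heq
  -- the chain of ratio inequalities
  have chain : ∀ a, l ≤ a → ∀ b, a ≤ b → b ≤ k - 1 → p a * p (b + 1) ≤ p (a + 1) * p b := by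
    intro a ha b hab
    induction b, hab using Nat.le_induction with
    | base => intro _; exact le_of_eq (mul_comm _ _)
    | succ b hb ihb =>
      intro hb1
      have h1 := ihb (by omega)
      have h2 := hNewton b
      have pbpos := hp_pos b (by omega)
      have pb1pos := hp_pos (b + 1) (by omega)
      have papos := hp_pos a (by omega)
      have pa1pos := hp_pos (a + 1) (by omega)
      nlinarith [mul_nonneg (sub_nonneg.2 h1) pb1pos.le,
        mul_nonneg papos.le (sub_nonneg.2 h2)]
  -- claim A : p l ≤ p (l+1)
  have claimA : ∀ j, l ≤ j → j ≤ k → p l ^ (j - l) * p j ≤ p (l + 1) ^ (j - l) * p l := by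
    intro j hlj
    induction j, hlj using Nat.le_induction with
    | base => intro _; simp
    | succ j hj ihj =>
      intro hjk
      have ihh := ihj (by omega)
      have hch := chain l le_rfl j hj (by omega)
      have hpl := hp_pos l (by omega)
      have hpl1 := hp_pos (l + 1) (by omega)
      have hexp : j + 1 - l = (j - l) + 1 := by omega
      rw [hexp, pow_succ, pow_succ]
      calc p l ^ (j - l) * p l * p (j + 1)
          = p l ^ (j - l) * (p l * p (j + 1)) := by ring
        _ ≤ p l ^ (j - l) * (p (l + 1) * p j) :=
            mul_le_mul_of_nonneg_left hch (pow_nonneg hpl.le _)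
        _ = (p l ^ (j - l) * p j) * p (l + 1) := by ring
        _ ≤ (p (l + 1) ^ (j - l) * p l) * p (l + 1) :=
            mul_le_mul_of_nonneg_right ihh hpl1.le
        _ = p (l + 1) ^ (j - l) * p (l + 1) * p l := by ring
  have hA : p l ≤ p (l + 1) := by
    have h := claimA k (by omega) le_rfl
    rw [heq'] at h
    have hpl := hp_pos l (by omega)
    have hpl1 := hp_pos (l + 1) (by omega)
    have hpow : p l ^ (k - l) ≤ p (l + 1) ^ (k - l) := by
      have := (mul_le_mul_iff_left₀ hpl).1 h
      exact this
    exact le_of_pow_le_pow_left₀ (by omega) hpl1.le hpow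
  -- claim B : p k ≤ p (k-1), then p (k+1) ≤ p k
  have claimB : ∀ j, l ≤ j → j ≤ k → p l * p k ^ (j - l) ≤ p j * p (k - 1) ^ (j - l) := by
    intro j hlj
    induction j, hlj using Nat.le_induction with
    | base => intro _; simp
    | succ j hj ihj =>
      intro hjk
      have ihh := ihj (by omega)
      have hch := chain j (by omega) (k - 1) (by omega) le_rfl
      rw [show k - 1 + 1 = k from by omega] at hch
      have hpk := hp_pos k le_rfl
      have hpk1 := hp_pos (k - 1) (by omega)
      have hexp : j + 1 - l = (j - l) + 1 := by omega
      rw [hexp, pow_succ, pow_succ]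
      calc p l * (p k ^ (j - l) * p k)
          = (p l * p k ^ (j - l)) * p k := by ring
        _ ≤ (p j * p (k - 1) ^ (j - l)) * p k :=
            mul_le_mul_of_nonneg_right ihh hpk.le
        _ = (p j * p k) * p (k - 1) ^ (j - l) := by ring
        _ ≤ (p (j + 1) * p (k - 1)) * p (k - 1) ^ (j - l) :=
            mul_le_mul_of_nonneg_right hch (pow_nonneg hpk1.le _)
        _ = p (j + 1) * (p (k - 1) ^ (j - l) * p (k - 1)) := by ring
  have hBk : p k ≤ p (k - 1) := by
    have h := claimB k (by omega) le_rfl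
    rw [← heq'] at h
    have hpk := hp_pos k le_rfl
    have hpk1 := hp_pos (k - 1) (by omega)
    have hpow : p k ^ (k - l) ≤ p (k - 1) ^ (k - l) := by
      have h' := (mul_le_mul_iff_right₀ hpk).1 h
      exact h'
    exact le_of_pow_le_pow_left₀ (by omega) hpk1.le hpow
  have hB : p (k + 1) ≤ p k := by
    have hNk := hNewton (k - 1)
    rw [show k - 1 + 1 = k from by omega, show k - 1 + 2 = k + 1 from by omega] at hNk
    have hpk := hp_pos k le_rfl
    have hpk1 := hp_pos (k - 1) (by omega)
    nlinarith [hNk, hBk, hpk, hpk1]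
  -- translate back to Svec
  have hS : ∀ j, j ≤ n → Svec n j lam = p j * (n.choose j : ℝ) := by
    intro j hj
    have hden : ((n.choose j : ℕ) : ℝ) ≠ 0 := by
      exact_mod_cast (Nat.choose_pos hj).ne'
    rw [hp]
    field_simp
  have hSk1 : Svec n (k + 1) lam = p (k + 1) * (n.choose (k + 1) : ℝ) := by
    rcases lt_or_eq_of_le hkn with hkn' | rfl
    · exact hS (k + 1) (by omega)
    · have h0 : Svec k (k + 1) lam = 0 := by
        rw [Svec, Finset.powersetCard_eq_empty.mpr (by simp), Finset.sum_empty]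
      have hc0 : (k.choose (k + 1) : ℝ) = 0 := by
        exact_mod_cast congrArg (Nat.cast : ℕ → ℝ) (Nat.choose_eq_zero_of_lt (by omega))
      rw [h0, hc0, mul_zero]
  have hSl := hS l (by omega)
  have hSl1 := hS (l + 1) (by omega)
  have hSk := hS k hkn
  -- coefficient identities
  have hcl : ((l:ℝ) + 1) * (n.choose (l + 1) : ℝ) = ((n:ℝ) - l) * (n.choose l : ℝ) := by
    have h := congrArg (Nat.cast : ℕ → ℝ) (Nat.choose_succ_right_eq n l)
    push_cast [Nat.cast_sub (show l ≤ n by omega)] at h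
    linarith
  have hck : ((k:ℝ) + 1) * (n.choose (k + 1) : ℝ) = ((n:ℝ) - k) * (n.choose k : ℝ) := by
    have h := congrArg (Nat.cast : ℕ → ℝ) (Nat.choose_succ_right_eq n k)
    push_cast [Nat.cast_sub hkn] at h
    linarith
  have expand : ((l : ℝ) + 1) * Svec n (l + 1) lam * Svec n k lam
      - ((k : ℝ) + 1) * Svec n (k + 1) lam * Svec n l lam
      - ((k : ℝ) - l) * Svec n k lam * Svec n l lam
      = ((n.choose l : ℝ) * (n.choose k : ℝ))
        * (((n:ℝ) - l) * p (l + 1) * p k - ((n:ℝ) - k) * p (k + 1) * p l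
          - ((k:ℝ) - l) * p k * p l) := by
    rw [hSl, hSl1, hSk, hSk1]
    linear_combination (p (l + 1) * p k * (n.choose k : ℝ)) * hcl
      - (p (k + 1) * p l * (n.choose l : ℝ)) * hck
  rw [expand]
  have hbra : 0 ≤ ((n:ℝ) - l) * p (l + 1) * p k - ((n:ℝ) - k) * p (k + 1) * p l
      - ((k:ℝ) - l) * p k * p l := by
    rw [show p l = p k from heq'.symm]
    have hpk := hp_pos k le_rfl
    have hnk : (0:ℝ) ≤ (n:ℝ) - k := by
      have : (k:ℝ) ≤ (n:ℝ) := by exact_mod_cast hkn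
      linarith
    have hkl : (0:ℝ) ≤ (k:ℝ) - l := by
      have : (l:ℝ) ≤ (k:ℝ) := by exact_mod_cast hlk.le
      linarith
    have h1 : (0:ℝ) ≤ ((n:ℝ) - l) * ((p (l + 1) - p k) * p k) := by
      have : p l ≤ p (l + 1) := hA
      have h2 : p k ≤ p (l + 1) := by rw [heq']; exact hA
      apply mul_nonneg (by linarith) (mul_nonneg (by linarith) hpk.le)
    have h2 : (0:ℝ) ≤ ((n:ℝ) - k) * ((p k - p (k + 1)) * p k) := by
      apply mul_nonneg hnk (mul_nonneg (by linarith [hB]) hpk.le)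
    nlinarith [h1, h2]
  have hcc : (0:ℝ) ≤ (n.choose l : ℝ) * (n.choose k : ℝ) := by positivity
  exact mul_nonneg hcc hbra
end
end

section
/- Let n ≥ 2 and let k, l be integers with 0 ≤ l < k ≤ n. Let λ ∈ ℝⁿ lie in the Gårding cone Γ_k and suppose S_k(λ)/C_n^k = S_l(λ)/C_n^l. Then (i) k (n−l+1) C_n^k S_{l−1}(λ) ≤ l (n−k+1) C_n^l S_{k−1}(λ), where S_{−1}(λ) := 0, and (ii) k S_k(λ) ≤ (n−k+1) S_{k−1}(λ). -/
open scoped BigOperators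

noncomputable section

section NewtonAux


open Multiset in
lemma myEsymm_cons (a : ℝ) (s : Multiset ℝ) (j : ℕ) :
    (a ::ₘ s).esymm (j+1) = s.esymm (j+1) + a * s.esymm j := by
  simp only [Multiset.esymm, Multiset.powersetCard_cons, Multiset.map_add, Multiset.sum_add,
    Multiset.map_map, Function.comp_def, Multiset.prod_cons]
  rw [Multiset.sum_map_mul_left]

open Multiset in
lemma myEsymm_zero (s : Multiset ℝ) : s.esymm 0 = 1 := by
  simp [Multiset.esymm]

open Multiset in
lemma myEsymm_one (s : Multiset ℝ) : s.esymm 1 = s.sum := by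
  simp [Multiset.esymm, Multiset.powersetCard_one, Multiset.map_map, Function.comp_def]

open Multiset in
lemma myEsymm_eq_zero (s : Multiset ℝ) (j : ℕ) (h : Multiset.card s < j) : s.esymm j = 0 := by
  simp [Multiset.esymm, Multiset.powersetCard_eq_empty _ h]

open Multiset in
lemma myEsymm_self (s : Multiset ℝ) : s.esymm (Multiset.card s) = s.prod := by
  induction s using Multiset.induction with
  | empty => simp [myEsymm_zero, Multiset.esymm]
  | cons a s ih =>
    rw [Multiset.card_cons, myEsymm_cons, myEsymm_eq_zero s _ (Nat.lt_succ_self _), ih,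
      Multiset.prod_cons, zero_add]

lemma mySumSq (s : Multiset ℝ) :
    s.sum ^ 2 = (s.map (fun x => x^2)).sum + 2 * s.esymm 2 := by
  induction s using Multiset.induction with
  | empty => simp [myEsymm_eq_zero 0 2 (by simp)]
  | cons a s ih =>
    rw [Multiset.sum_cons, Multiset.map_cons, Multiset.sum_cons, myEsymm_cons, myEsymm_one]
    nlinarith [ih]

lemma myCS (s : Multiset ℝ) :
    s.sum ^ 2 ≤ (Multiset.card s : ℝ) * (s.map (fun x => x^2)).sum := by
  induction s using Multiset.induction with
  | empty => simp
  | cons a s ih =>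
    rw [Multiset.sum_cons, Multiset.map_cons, Multiset.sum_cons, Multiset.card_cons]
    by_cases hs : s = 0
    · simp [hs]
    · have hq : (0:ℝ) ≤ (s.map (fun x => x^2)).sum :=
        Multiset.sum_nonneg (by intro x hx; obtain ⟨y, _, rfl⟩ := Multiset.mem_map.1 hx; positivity)
      have hc1 : (1:ℝ) ≤ (Multiset.card s : ℝ) := by
        have := Multiset.card_pos.2 hs; exact_mod_cast this
      have hc : (0:ℝ) ≤ (Multiset.card s : ℝ) := by linarith
      push_cast
      nlinarith [sq_nonneg ((Multiset.card s : ℝ) * a - s.sum), ih, hq, hc1,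
        mul_le_mul_of_nonneg_left ih hc]

lemma myDual (s : Multiset ℝ) (h0 : (0:ℝ) ∉ s) :
    ∀ i j : ℕ, i + j = Multiset.card s →
      s.prod * ((s.map (fun x => x⁻¹)).esymm j) = s.esymm i := by
  induction s using Multiset.induction with
  | empty =>
    intro i j hij
    simp at hij
    simp [hij.1, hij.2, myEsymm_zero]
  | cons a s ih =>
    intro i j hij
    have ha : a ≠ 0 := fun h => h0 (h ▸ Multiset.mem_cons_self a s)
    have h0s : (0:ℝ) ∉ s := fun h => h0 (Multiset.mem_cons_of_mem h)
    have hps : s.prod ≠ 0 := Multiset.prod_ne_zero h0s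
    rw [Multiset.card_cons] at hij
    rcases j with _ | j
    · have : i = Multiset.card (a ::ₘ s) := by rw [Multiset.card_cons]; omega
      rw [this, myEsymm_self, myEsymm_zero, mul_one]
    · rw [Multiset.map_cons, Multiset.prod_cons, myEsymm_cons]
      rcases i with _ | i
      · have hj : j = Multiset.card s := by omega
        have hcm : Multiset.card (s.map (fun x => x⁻¹)) = j := by rw [Multiset.card_map, hj]
        rw [myEsymm_eq_zero _ _ (by rw [Multiset.card_map]; omega), myEsymm_zero, ← hcm,
          myEsymm_self, Multiset.prod_map_inv]
        field_simp
        simp [hps]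
      · have h1 : s.prod * ((s.map (fun x => x⁻¹)).esymm (j+1)) = s.esymm i :=
          ih h0s i (j+1) (by omega)
        have h2 : s.prod * ((s.map (fun x => x⁻¹)).esymm j) = s.esymm (i+1) :=
          ih h0s (i+1) j (by omega)
        have haa : a * a⁻¹ = 1 := mul_inv_cancel₀ ha
        rw [myEsymm_cons]
        linear_combination a * h1 + h2 + (s.prod * ((s.map (fun x => x⁻¹)).esymm j)) * haa

lemma myCore (s : Multiset ℝ) (d : ℕ) (hc : Multiset.card s = d + 2) :
    2 * ((d:ℝ)+2) * s.esymm d * s.esymm (d+2) ≤ ((d:ℝ)+1) * (s.esymm (d+1))^2 := by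
  by_cases hp : s.prod = 0
  · have : s.esymm (d+2) = 0 := by rw [← hc, myEsymm_self, hp]
    rw [this]
    nlinarith [sq_nonneg (s.esymm (d+1)), Nat.cast_nonneg (α := ℝ) d]
  · have h0 : (0:ℝ) ∉ s := fun h => hp (Multiset.prod_eq_zero h)
    set μ := s.map (fun x => x⁻¹) with hμ
    have e2 : s.prod * μ.esymm 2 = s.esymm d := myDual s h0 d 2 (by omega)
    have e1 : s.prod * μ.esymm 1 = s.esymm (d+1) := myDual s h0 (d+1) 1 (by omega)
    have e0 : s.prod * μ.esymm 0 = s.esymm (d+2) := myDual s h0 (d+2) 0 (by omega)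
    rw [myEsymm_zero, mul_one] at e0
    have hcard : (Multiset.card μ : ℝ) = (d:ℝ) + 2 := by rw [hμ, Multiset.card_map, hc]; push_cast; ring
    have hss := mySumSq μ
    have hcs := myCS μ
    rw [hcard] at hcs
    rw [← myEsymm_one μ] at hss hcs
    -- hss : (esymm 1)^2 = Σsq + 2 esymm 2 ; hcs : (esymm 1)^2 ≤ (d+2) * Σsq
    have key : 2 * ((d:ℝ)+2) * μ.esymm 2 ≤ ((d:ℝ)+1) * (μ.esymm 1)^2 := by nlinarith [hss, hcs]
    calc 2 * ((d:ℝ)+2) * s.esymm d * s.esymm (d+2)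
        = (2 * ((d:ℝ)+2) * μ.esymm 2) * s.prod^2 := by rw [← e2, ← e0]; ring
      _ ≤ (((d:ℝ)+1) * (μ.esymm 1)^2) * s.prod^2 := by
          nlinarith [key, sq_nonneg s.prod, mul_le_mul_of_nonneg_right key (sq_nonneg s.prod)]
      _ = ((d:ℝ)+1) * (s.esymm (d+1))^2 := by rw [← e1]; ring

open Polynomial in
lemma myIter (p : ℝ[X]) (hroots : Multiset.card p.roots = p.natDegree) :
    ∀ j : ℕ, j ≤ p.natDegree →
      Multiset.card (derivative^[j] p).roots = p.natDegree - j ∧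
      (derivative^[j] p).natDegree = p.natDegree - j := by
  intro j
  induction j with
  | zero => simp [hroots]
  | succ j ih =>
    intro hj
    obtain ⟨hr, hd⟩ := ih (by omega)
    have h1 := (derivative^[j] p).card_roots_le_derivative
    have h2 := natDegree_derivative_le (derivative^[j] p)
    have h3 := card_roots' (derivative (derivative^[j] p))
    rw [Function.iterate_succ_apply']
    omega


open Polynomial in
lemma myNewton (n m : ℕ) (lam : Fin n → ℝ) (h : m + 2 ≤ n) :
    Svec n m lam * Svec n (m+2) lam * ((n.choose (m+1) : ℝ))^2
      ≤ (Svec n (m+1) lam)^2 * (n.choose m : ℝ) * (n.choose (m+2) : ℝ) := by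
  by_cases hS2 : Svec n (m+2) lam = 0
  · rw [hS2]
    have : (0:ℝ) ≤ (Svec n (m+1) lam)^2 * (n.choose m : ℝ) * (n.choose (m+2) : ℝ) := by
      positivity
    linarith
  -- setup
  have hSL : ∀ j : ℕ, ((Finset.univ.val.map lam).esymm j) = Svec n j lam := fun j =>
    Finset.esymm_map_val lam Finset.univ j
  set M : Multiset ℝ := (Finset.univ.val.map lam).map Neg.neg with hM
  have hcardM : Multiset.card M = n := by simp [hM]
  set f : Polynomial ℝ := (M.map (fun a => X - C a)).prod with hf
  have hdeg : f.natDegree = n := by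
    rw [hf, natDegree_multiset_prod_X_sub_C_eq_card, hcardM]
  have hroots : f.roots = M := roots_multiset_prod_X_sub_C M
  have hcoeff : ∀ jj : ℕ, jj ≤ n → f.coeff jj = Svec n (n - jj) lam := by
    intro jj hjj
    rw [hf, Multiset.prod_X_sub_C_coeff M (by omega : jj ≤ Multiset.card M), hcardM, hM,
      Multiset.esymm_neg, ← mul_assoc, ← pow_add, Even.neg_one_pow ⟨n - jj, rfl⟩, one_mul, hSL]
  set t := n - m - 2 with ht
  set g := (Polynomial.derivative)^[t] f with hg
  obtain ⟨hgr0, hgd0⟩ := myIter f (by rw [hroots, hcardM, hdeg]) t (by omega)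
  rw [hdeg, (by omega : n - t = m + 2)] at hgr0 hgd0
  have hgd : g.natDegree = m + 2 := hgd0
  have hgr : Multiset.card g.roots = m + 2 := hgr0
  have hg0 : g ≠ 0 := fun h0 => by rw [h0] at hgd; simp at hgd
  have ha0 : g.leadingCoeff ≠ 0 := leadingCoeff_ne_zero.mpr hg0
  set a := g.leadingCoeff with ha
  set R := g.roots with hR
  set ε : ℝ := (-1)^m with hε
  -- coefficient equations
  have hgc : ∀ jj : ℕ, jj ≤ 2 → ((jj + t).descFactorial t : ℝ) * Svec n (m + 2 - jj) lam
      = a * (-1)^(m + 2 - jj) * R.esymm (m + 2 - jj) := by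
    intro jj hjj
    have e1 : g.coeff jj = ((jj + t).descFactorial t : ℝ) * f.coeff (jj + t) := by
      rw [hg, Polynomial.coeff_iterate_derivative, nsmul_eq_mul]
    have e2 := Polynomial.coeff_eq_esymm_roots_of_card (p := g)
      (hgr.trans hgd.symm) (k := jj) (by rw [hgd]; omega)
    rw [hgd] at e2
    rw [hcoeff (jj + t) (by omega), (by omega : n - (jj + t) = m + 2 - jj)] at e1
    rw [← e1]
    exact e2
  -- instantiate
  have e0 := hgc 0 (by omega)
  have e1 := hgc 1 (by omega)
  have e2 := hgc 2 (by omega)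
  rw [show m + 2 - 0 = m + 2 by omega] at e0
  rw [show m + 2 - 1 = m + 1 by omega] at e1
  rw [show m + 2 - 2 = m by omega] at e2
  rw [show ((-1:ℝ))^(m+2) = ε by rw [hε]; ring] at e0
  rw [show ((-1:ℝ))^(m+1) = -ε by rw [hε]; ring] at e1
  rw [show ((-1:ℝ))^m = ε from hε.symm] at e2
  -- descFactorial arithmetic
  have h0 : (0 + t).descFactorial t = t.factorial := by
    rw [Nat.zero_add, Nat.descFactorial_self]
  have h1 : (1 + t).descFactorial t = t.factorial * (t+1) := by
    rw [Nat.descFactorial_eq_factorial_mul_choose, show 1 + t = t + 1 by omega,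
      Nat.choose_succ_self_right]
  obtain ⟨cc, hcc⟩ : Even ((t+2)*(t+1)) := by rw [mul_comm]; exact Nat.even_mul_succ_self (t+1)
  have h2 : 2 * ((2 + t).descFactorial t) = t.factorial * ((t+2)*(t+1)) := by
    rw [Nat.descFactorial_eq_factorial_mul_choose, show 2 + t = t + 2 by omega,
      show (t+2).choose t = (t+2).choose 2 by
        rw [← Nat.choose_symm (by omega : 2 ≤ t+2), show t+2-2 = t by omega],
      Nat.choose_two_right, show t+2-1 = t+1 by omega, hcc, show (cc+cc)/2 = cc by omega]
    ring
  have hC0 : ((0 + t).descFactorial t : ℝ) = (t.factorial : ℝ) := by exact_mod_cast h0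
  have hC1 : ((1 + t).descFactorial t : ℝ) = (t.factorial : ℝ) * ((t:ℝ)+1) := by
    exact_mod_cast h1
  have hC2 : 2 * ((2 + t).descFactorial t : ℝ) = (t.factorial : ℝ) * (((t:ℝ)+2)*((t:ℝ)+1)) := by
    exact_mod_cast h2
  have hF : (0:ℝ) < (t.factorial : ℝ) := by exact_mod_cast t.factorial_pos
  have hAB : (n.choose (m+1) : ℝ) * ((m:ℝ)+1) = (n.choose m : ℝ) * ((t:ℝ)+2) := by
    have h' := Nat.choose_succ_right_eq n m
    rw [show n - m = t + 2 by omega] at h'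
    exact_mod_cast h'
  have hBC : (n.choose (m+2) : ℝ) * ((m:ℝ)+2) = (n.choose (m+1) : ℝ) * ((t:ℝ)+1) := by
    have h' := Nat.choose_succ_right_eq n (m+1)
    rw [show n - (m+1) = t + 1 by omega] at h'
    exact_mod_cast h'
  have claim : ((m:ℝ)+1) * (n.choose (m+1):ℝ)^2 * ((1+t).descFactorial t : ℝ)^2
      = 2*((m:ℝ)+2)*(n.choose m:ℝ)*(n.choose (m+2):ℝ)*((0+t).descFactorial t:ℝ)
        *((2+t).descFactorial t:ℝ) := by
    linear_combination
      ((m:ℝ)+1)*(n.choose (m+1):ℝ)^2*(((1+t).descFactorial t : ℝ) + (t.factorial : ℝ)*((t:ℝ)+1)) * hC1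
      - ((m:ℝ)+2)*(n.choose m:ℝ)*(n.choose (m+2):ℝ)*((0+t).descFactorial t:ℝ) * hC2
      - ((m:ℝ)+2)*(n.choose m:ℝ)*(n.choose (m+2):ℝ)*(t.factorial : ℝ)*((t:ℝ)+2)*((t:ℝ)+1) * hC0
      + (n.choose (m+1):ℝ)*(t.factorial : ℝ)^2*((t:ℝ)+1)^2 * hAB
      - (n.choose m:ℝ)*((t:ℝ)+2)*((t:ℝ)+1)*(t.factorial : ℝ)^2 * hBC
  -- positivity of the multiplier
  have hp0 : (0:ℝ) < ((0+t).descFactorial t : ℝ) := by rw [hC0]; exact hF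
  have hp1 : (0:ℝ) < ((1+t).descFactorial t : ℝ) := by rw [hC1]; positivity
  have hp2 : (0:ℝ) < ((2+t).descFactorial t : ℝ) := by nlinarith [hC2, hF]
  have core' := myCore R m hgr
  have hM0 : (0:ℝ) < (((m:ℝ)+2)*(2*((0+t).descFactorial t:ℝ)*((2+t).descFactorial t:ℝ)
      *((1+t).descFactorial t:ℝ)^2)) := by positivity
  have key : (((m:ℝ)+2)*(2*((0+t).descFactorial t:ℝ)*((2+t).descFactorial t:ℝ)
        *((1+t).descFactorial t:ℝ)^2))
        * (Svec n m lam * Svec n (m+2) lam * ((n.choose (m+1) : ℝ))^2)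
      ≤ (((m:ℝ)+2)*(2*((0+t).descFactorial t:ℝ)*((2+t).descFactorial t:ℝ)
        *((1+t).descFactorial t:ℝ)^2))
        * ((Svec n (m+1) lam)^2 * (n.choose m : ℝ) * (n.choose (m+2) : ℝ)) := by
    calc (((m:ℝ)+2)*(2*((0+t).descFactorial t:ℝ)*((2+t).descFactorial t:ℝ)
        *((1+t).descFactorial t:ℝ)^2))
        * (Svec n m lam * Svec n (m+2) lam * ((n.choose (m+1) : ℝ))^2)
        = (a^2*ε^2*((n.choose (m+1) : ℝ))^2*((1+t).descFactorial t:ℝ)^2)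
            * (2*((m:ℝ)+2) * R.esymm m * R.esymm (m+2)) := by
          linear_combination
            (2*((m:ℝ)+2)*((n.choose (m+1) : ℝ))^2*((1+t).descFactorial t:ℝ)^2
              *((2+t).descFactorial t:ℝ)*Svec n m lam) * e0
            + (2*((m:ℝ)+2)*((n.choose (m+1) : ℝ))^2*((1+t).descFactorial t:ℝ)^2
              *(a*ε*R.esymm (m+2))) * e2
      _ ≤ (a^2*ε^2*((n.choose (m+1) : ℝ))^2*((1+t).descFactorial t:ℝ)^2)
            * (((m:ℝ)+1)*(R.esymm (m+1))^2) := by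
          apply mul_le_mul_of_nonneg_left core' (by positivity)
      _ = (((m:ℝ)+2)*(2*((0+t).descFactorial t:ℝ)*((2+t).descFactorial t:ℝ)
        *((1+t).descFactorial t:ℝ)^2))
        * ((Svec n (m+1) lam)^2 * (n.choose m : ℝ) * (n.choose (m+2) : ℝ)) := by
          linear_combination
            (a*ε*R.esymm (m+1))^2 * claim
            + (2*((m:ℝ)+2)*(n.choose m:ℝ)*(n.choose (m+2):ℝ)*((0+t).descFactorial t:ℝ)
              *((2+t).descFactorial t:ℝ))
              *((a*ε*R.esymm (m+1)) - ((1+t).descFactorial t:ℝ)*Svec n (m+1) lam) * e1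
  exact le_of_mul_le_mul_left key hM0


end NewtonAux

/-- If `λ ∈ Γ_k` and `S_k(λ)/C_n^k = S_l(λ)/C_n^l`, then
(i) `k(n−l+1) C_n^k S_{l−1} ≤ l(n−k+1) C_n^l S_{k−1}` (with `S_{−1} := 0`), and
(ii) `k S_k ≤ (n−k+1) S_{k−1}`. -/
theorem maclaurin_coefficient_inequalities
    (n k l : ℕ) (hn : 2 ≤ n) (hlk : l < k) (hkn : k ≤ n)
    (lam : Fin n → ℝ) (hlam : lam ∈ GardingCone n k)
    (heq : Svec n k lam / (n.choose k : ℝ) = Svec n l lam / (n.choose l : ℝ)) :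
    (k : ℝ) * ((n : ℝ) - l + 1) * (n.choose k : ℝ) * SvecZ n ((l : ℤ) - 1) lam
        ≤ (l : ℝ) * ((n : ℝ) - k + 1) * (n.choose l : ℝ) * SvecZ n ((k : ℤ) - 1) lam
      ∧ (k : ℝ) * Svec n k lam ≤ ((n : ℝ) - k + 1) * SvecZ n ((k : ℤ) - 1) lam := by
  have hk1 : 1 ≤ k := by omega
  set p : ℕ → ℝ := fun j => Svec n j lam / (n.choose j : ℝ) with hpdef
  have hcpos : ∀ j, j ≤ n → 0 < (n.choose j : ℝ) := fun j hj => by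
    exact_mod_cast Nat.choose_pos hj
  have hS0 : Svec n 0 lam = 1 := by simp [Svec]
  have hppos : ∀ j, j ≤ k → 0 < p j := by
    intro j hj
    rcases Nat.eq_zero_or_pos j with rfl | hj1
    · simp [hpdef, hS0]
    · exact div_pos (hlam j hj1 hj) (hcpos j (by omega))
  have hnewton : ∀ j, j + 2 ≤ k → p j * p (j+2) ≤ p (j+1)^2 := by
    intro j hj
    have hA := hcpos j (by omega)
    have hB := hcpos (j+1) (by omega)
    have hC := hcpos (j+2) (by omega)
    have hN := myNewton n j lam (by omega)
    simp only [hpdef]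
    rw [div_mul_div_comm, div_pow, div_le_div_iff₀ (by positivity) (by positivity)]
    nlinarith [hN]
  set q : ℕ → ℝ := fun j => p (j+1) / p j with hqdef
  have hqpos : ∀ j, j + 1 ≤ k → 0 < q j :=
    fun j hj => div_pos (hppos (j+1) hj) (hppos j (by omega))
  have hstep : ∀ j, j + 2 ≤ k → q (j+1) ≤ q j := by
    intro j hj
    have h1 := hppos j (by omega)
    have h2 := hppos (j+1) (by omega)
    simp only [hqdef]
    rw [div_le_div_iff₀ h2 h1]
    nlinarith [hnewton j hj]
  have hqanti : ∀ i d, i + d + 1 ≤ k → q (i + d) ≤ q i := by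
    intro i d
    induction d with
    | zero => intro _; exact le_refl _
    | succ d ih =>
      intro hd
      exact le_trans (hstep (i + d) (by omega)) (ih (by omega))
  have htel : ∀ b, l ≤ b → b ≤ k → p b = p l * ∏ j ∈ Finset.Ico l b, q j := by
    intro b hlb
    induction b, hlb using Nat.le_induction with
    | base => intro _; simp
    | succ b hlb ih =>
      intro hbk
      rw [Finset.prod_Ico_succ_top hlb, ← mul_assoc, ← ih (by omega)]
      have hb0 : p b ≠ 0 := ne_of_gt (hppos b (by omega))
      simp only [hqdef]
      field_simp
  have hpkl : p k = p l := heq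
  have hprod1 : ∏ j ∈ Finset.Ico l k, q j = 1 := by
    have h1 := htel k (by omega) (le_refl k)
    have h2 : p l ≠ 0 := ne_of_gt (hppos l (by omega))
    rw [hpkl] at h1
    field_simp at h1
    linarith [h1]
  have hcard : (Finset.Ico l k).card = k - l := Nat.card_Ico l k
  have hqk1 : q (k-1) ≤ 1 := by
    have hpow : q (k-1) ^ (k - l) ≤ 1 := by
      calc q (k-1) ^ (k-l) = ∏ _j ∈ Finset.Ico l k, q (k-1) := by
            rw [Finset.prod_const, hcard]
        _ ≤ ∏ j ∈ Finset.Ico l k, q j := by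
            apply Finset.prod_le_prod
            · intro j hj; exact (hqpos (k-1) (by omega)).le
            · intro j hj
              rw [Finset.mem_Ico] at hj
              have := hqanti j (k-1-j) (by omega)
              rwa [show j + (k-1-j) = k-1 by omega] at this
        _ = 1 := hprod1
    exact (pow_le_one_iff_of_nonneg (hqpos (k-1) (by omega)).le (by omega)).mp hpow
  have hql1 : 1 ≤ q l := by
    have hpow : (1:ℝ) ≤ q l ^ (k - l) := by
      calc (1:ℝ) = ∏ j ∈ Finset.Ico l k, q j := hprod1.symm
        _ ≤ ∏ _j ∈ Finset.Ico l k, q l := by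
            apply Finset.prod_le_prod
            · intro j hj
              rw [Finset.mem_Ico] at hj
              exact (hqpos j (by omega)).le
            · intro j hj
              rw [Finset.mem_Ico] at hj
              have := hqanti l (j-l) (by omega)
              rwa [show l + (j-l) = j by omega] at this
        _ = q l ^ (k-l) := by rw [Finset.prod_const, hcard]
    by_contra hcon
    push_neg at hcon
    have := pow_lt_one₀ (hqpos l (by omega)).le hcon (by omega : k - l ≠ 0)
    linarith
  have hpk1 : p k ≤ p (k-1) := by
    have hmul : p (k-1) * q (k-1) = p k := by
      simp only [hqdef]
      rw [mul_div_cancel₀ _ (ne_of_gt (hppos (k-1) (by omega))), show k-1+1 = k by omega]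
    nlinarith [hppos (k-1) (by omega : k-1 ≤ k), hqk1, hmul]
  -- identity: choose n k * k = choose n (k-1) * (n-k+1)
  have idk : (n.choose k : ℝ) * k = (n.choose (k-1) : ℝ) * ((n:ℝ) - k + 1) := by
    have h' := Nat.choose_succ_right_eq n (k-1)
    rw [show k - 1 + 1 = k by omega, show n - (k-1) = n - k + 1 by omega] at h'
    calc (n.choose k : ℝ) * k = ((n.choose k * k : ℕ) : ℝ) := by push_cast; ring
      _ = ((n.choose (k-1) * (n - k + 1) : ℕ) : ℝ) := by rw [h']
      _ = (n.choose (k-1) : ℝ) * ((n:ℝ) - k + 1) := by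
          push_cast [Nat.cast_sub hkn]; ring
  have hZk : SvecZ n ((k:ℤ) - 1) lam = Svec n (k-1) lam := by
    rw [SvecZ, if_pos (by omega : (0:ℤ) ≤ (k:ℤ) - 1)]
    congr 1
    omega
  have hck1 := hcpos (k-1) (by omega)
  have hck := hcpos k hkn
  -- part (ii)
  have part2 : (k : ℝ) * Svec n k lam ≤ ((n : ℝ) - k + 1) * SvecZ n ((k : ℤ) - 1) lam := by
    rw [hZk]
    have hpk1' : Svec n k lam * (n.choose (k-1) : ℝ) ≤ Svec n (k-1) lam * (n.choose k : ℝ) := by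
      rw [← div_le_div_iff₀ hck hck1]
      exact hpk1
    have h41 := mul_le_mul_of_nonneg_left hpk1' (by positivity : (0:ℝ) ≤ (k:ℝ))
    have h5 : Svec n (k-1) lam * ((n.choose k : ℝ) * k)
        = Svec n (k-1) lam * ((n.choose (k-1) : ℝ) * ((n:ℝ) - k + 1)) := by rw [idk]
    have h6 : ((k:ℝ) * Svec n k lam) * (n.choose (k-1) : ℝ)
        ≤ (((n:ℝ) - k + 1) * Svec n (k-1) lam) * (n.choose (k-1) : ℝ) := by nlinarith [h41, h5]
    exact le_of_mul_le_mul_right h6 hck1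
  refine ⟨?_, part2⟩
  -- part (i)
  rcases Nat.eq_zero_or_pos l with rfl | hl1
  · rw [show ((0:ℕ):ℤ) - 1 = -1 by omega, SvecZ, if_neg (by omega)]
    simp
  · -- l ≥ 1
    have hZl : SvecZ n ((l:ℤ) - 1) lam = Svec n (l-1) lam := by
      rw [SvecZ, if_pos (by omega : (0:ℤ) ≤ (l:ℤ) - 1)]
      congr 1
      omega
    rw [hZl, hZk]
    have hcl1 := hcpos (l-1) (by omega)
    have hcl := hcpos l (by omega)
    have idl : (n.choose l : ℝ) * l = (n.choose (l-1) : ℝ) * ((n:ℝ) - l + 1) := by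
      have h' := Nat.choose_succ_right_eq n (l-1)
      rw [show l - 1 + 1 = l by omega, show n - (l-1) = n - l + 1 by omega] at h'
      calc (n.choose l : ℝ) * l = ((n.choose l * l : ℕ) : ℝ) := by push_cast; ring
        _ = ((n.choose (l-1) * (n - l + 1) : ℕ) : ℝ) := by rw [h']
        _ = (n.choose (l-1) : ℝ) * ((n:ℝ) - l + 1) := by
            push_cast [Nat.cast_sub (by omega : l ≤ n)]; ring
    -- p (l-1) ≤ p (k-1)
    have hql0 : 1 ≤ q (l-1) := by
      have h1 : q l ≤ q (l-1) := by
        have := hqanti (l-1) 1 (by omega)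
        rwa [show l - 1 + 1 = l by omega] at this
      linarith [hql1]
    have hpl1 : p (l-1) ≤ p l := by
      have hmul : p (l-1) * q (l-1) = p l := by
        simp only [hqdef]
        rw [mul_div_cancel₀ _ (ne_of_gt (hppos (l-1) (by omega))), show l-1+1 = l by omega]
      nlinarith [hppos (l-1) (by omega : l-1 ≤ k), hql0, hmul]
    have hplk : p (l-1) ≤ p (k-1) := by
      calc p (l-1) ≤ p l := hpl1
        _ = p k := hpkl.symm
        _ ≤ p (k-1) := hpk1
    have hplk' : Svec n (l-1) lam * (n.choose (k-1) : ℝ) ≤ Svec n (k-1) lam * (n.choose (l-1) : ℝ) := by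
      rw [← div_le_div_iff₀ hcl1 hck1]
      exact hplk
    have h7 : (0:ℝ) ≤ ((n:ℝ) - k + 1) * ((n:ℝ) - l + 1) := by
      have hkn' : (k:ℝ) ≤ n := by exact_mod_cast hkn
      have hln' : (l:ℝ) ≤ n := by
        have : l ≤ n := by omega
        exact_mod_cast this
      exact mul_nonneg (by linarith) (by linarith)
    have h8 := mul_le_mul_of_nonneg_left hplk' h7
    have idk' : ((n:ℝ)-l+1) * Svec n (l-1) lam * ((n.choose k:ℝ) * k)
        = ((n:ℝ)-l+1) * Svec n (l-1) lam * ((n.choose (k-1) : ℝ) * ((n:ℝ) - k + 1)) := by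
      rw [idk]
    have idl' : ((n:ℝ)-k+1) * Svec n (k-1) lam * ((n.choose l:ℝ) * l)
        = ((n:ℝ)-k+1) * Svec n (k-1) lam * ((n.choose (l-1) : ℝ) * ((n:ℝ) - l + 1)) := by
      rw [idl]
    linarith [h8, idk', idl']
end
end

section
/- Let n ≥ 2 and let k, l be integers with 0 ≤ l < k ≤ n − 1. Let λ ∈ ℝⁿ lie in the Gårding cone Γ_k and suppose S_k(λ)/C_n^k = S_l(λ)/C_n^l and S_{k+1}(λ)/C_n^{k+1} = S_k(λ)/C_n^k (i.e., equality holds in the Maclaurin inequality (k+1)S_{k+1}(λ) ≤ (n−k)S_k(λ)). Then all the components of λ are equal: λ_1 = λ_2 = ⋯ = λ_n. -/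
open scoped BigOperators
open Polynomial

noncomputable section

lemma svec_eq_esymm (n j : ℕ) (lam : Fin n → ℝ) :
    Svec n j lam = (Multiset.map lam Finset.univ.val).esymm j := by
  rw [Finset.esymm_map_val]; rfl

lemma card_map_univ (n : ℕ) (lam : Fin n → ℝ) :
    Multiset.card (Multiset.map lam Finset.univ.val) = n := by
  simp

lemma svec_zero (n : ℕ) (lam : Fin n → ℝ) : Svec n 0 lam = 1 := by
  simp [Svec]

lemma svec_top (n : ℕ) (lam : Fin n → ℝ) : Svec n n lam = ∏ i, lam i := by
  have h := Finset.powersetCard_self (Finset.univ : Finset (Fin n))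
  rw [Finset.card_univ, Fintype.card_fin] at h
  rw [Svec, h]
  simp

-- the polynomial
lemma poly_eq (n : ℕ) (lam : Fin n → ℝ) :
    (∏ i, (X - C (lam i)) : ℝ[X])
      = ((Multiset.map lam Finset.univ.val).map (fun t => X - C t)).prod := by
  rw [Finset.prod_eq_multiset_prod, Multiset.map_map]
  rfl

lemma poly_coeff (n : ℕ) (lam : Fin n → ℝ) {m : ℕ} (hm : m ≤ n) :
    (∏ i, (X - C (lam i)) : ℝ[X]).coeff m = (-1) ^ (n - m) * Svec n (n - m) lam := by
  rw [poly_eq, Multiset.prod_X_sub_C_coeff _ (by simpa using hm), card_map_univ,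
    svec_eq_esymm]

namespace MacBase

variable {n : ℕ} (lam : Fin n → ℝ)

/-- product over complement of i -/
def aa (lam : Fin n → ℝ) (i : Fin n) : ℝ := ∏ j ∈ Finset.univ.erase i, lam j

lemma deriv_prod_lin (s : Finset (Fin n)) :
    derivative (∏ i ∈ s, (X - C (lam i))) = ∑ i ∈ s, ∏ j ∈ s.erase i, (X - C (lam j)) := by
  rw [Finset.prod_eq_multiset_prod, Polynomial.derivative_prod]
  rw [Finset.sum_eq_multiset_sum]
  congr 1
  apply Multiset.map_congr rfl
  intro i hi
  rw [derivative_sub, derivative_X, derivative_C, sub_zero, mul_one, ← Finset.erase_val,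
    ← Finset.prod_eq_multiset_prod]

lemma eval0_prod (t : Finset (Fin n)) :
    Polynomial.eval 0 (∏ j ∈ t, (X - C (lam j))) = (-1 : ℝ) ^ t.card * ∏ j ∈ t, lam j := by
  rw [Polynomial.eval_prod]
  have : ∀ j ∈ t, Polynomial.eval 0 (X - C (lam j)) = (-1) * lam j := by
    intro j _; simp
  rw [Finset.prod_congr rfl this, Finset.prod_mul_distrib, Finset.prod_const]

lemma I1 (hn : 1 ≤ n) : ∑ i, aa lam i = Svec n (n - 1) lam := by
  have h1 : (derivative (∏ i, (X - C (lam i)) : ℝ[X])).coeff 0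
      = (-1 : ℝ) ^ (n - 1) * Svec n (n - 1) lam := by
    rw [Polynomial.coeff_derivative, poly_coeff n lam hn]
    norm_num
  have h2 : (derivative (∏ i, (X - C (lam i)) : ℝ[X])).coeff 0
      = (-1 : ℝ) ^ (n - 1) * ∑ i, aa lam i := by
    rw [Polynomial.coeff_zero_eq_eval_zero, deriv_prod_lin, Polynomial.eval_finset_sum]
    rw [Finset.mul_sum]
    apply Finset.sum_congr rfl
    intro i _
    rw [eval0_prod, Finset.card_erase_of_mem (Finset.mem_univ i), Finset.card_univ,
      Fintype.card_fin]
    rfl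
  have h3 := h1.symm.trans h2
  have hne : ((-1 : ℝ) ^ (n - 1)) ≠ 0 := by positivity
  exact (mul_left_cancel₀ hne h3).symm

lemma D2 (hn : 2 ≤ n) :
    ∑ i, ∑ j ∈ Finset.univ.erase i, ∏ m ∈ (Finset.univ.erase i).erase j, lam m
      = 2 * Svec n (n - 2) lam := by
  have h1 : (derivative (derivative (∏ i, (X - C (lam i)) : ℝ[X]))).coeff 0
      = 2 * ((-1 : ℝ) ^ (n - 2) * Svec n (n - 2) lam) := by
    rw [Polynomial.coeff_derivative, Polynomial.coeff_derivative, poly_coeff n lam hn]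
    norm_num
    ring
  have h2 : (derivative (derivative (∏ i, (X - C (lam i)) : ℝ[X]))).coeff 0
      = (-1 : ℝ) ^ (n - 2) *
        ∑ i, ∑ j ∈ Finset.univ.erase i, ∏ m ∈ (Finset.univ.erase i).erase j, lam m := by
    rw [Polynomial.coeff_zero_eq_eval_zero, deriv_prod_lin, derivative_sum]
    have : ∀ i ∈ (Finset.univ : Finset (Fin n)),
        derivative (∏ j ∈ Finset.univ.erase i, (X - C (lam j)))
          = ∑ j ∈ Finset.univ.erase i, ∏ m ∈ (Finset.univ.erase i).erase j, (X - C (lam m)) :=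
      fun i _ => deriv_prod_lin lam _
    rw [Finset.sum_congr rfl this, Polynomial.eval_finset_sum, Finset.mul_sum]
    apply Finset.sum_congr rfl
    intro i _
    rw [Polynomial.eval_finset_sum, Finset.mul_sum]
    apply Finset.sum_congr rfl
    intro j hj
    rw [eval0_prod, Finset.card_erase_of_mem hj, Finset.card_erase_of_mem (Finset.mem_univ i),
      Finset.card_univ, Fintype.card_fin, Nat.sub_sub]
  have h3 := h1.symm.trans h2
  have hne : ((-1 : ℝ) ^ (n - 2)) ≠ 0 := by positivity
  have : (-1 : ℝ) ^ (n - 2) * (2 * Svec n (n - 2) lam) = (-1 : ℝ) ^ (n - 2) *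
      ∑ i, ∑ j ∈ Finset.univ.erase i, ∏ m ∈ (Finset.univ.erase i).erase j, lam m := by
    rw [← h3]; ring
  exact (mul_left_cancel₀ hne this).symm

lemma aa_mul_aa {i j : Fin n} (hij : j ≠ i) :
    aa lam i * aa lam j
      = (∏ m, lam m) * ∏ m ∈ (Finset.univ.erase i).erase j, lam m := by
  have hji : j ∈ Finset.univ.erase i := Finset.mem_erase.2 ⟨hij, Finset.mem_univ j⟩
  have hij' : i ∈ Finset.univ.erase j :=
    Finset.mem_erase.2 ⟨fun h => hij h.symm, Finset.mem_univ i⟩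
  have e1 : aa lam i = lam j * ∏ m ∈ (Finset.univ.erase i).erase j, lam m :=
    (Finset.mul_prod_erase _ _ hji).symm
  have e2 : aa lam j = lam i * ∏ m ∈ (Finset.univ.erase j).erase i, lam m :=
    (Finset.mul_prod_erase _ _ hij').symm
  have e3 : (Finset.univ.erase j).erase i = (Finset.univ.erase i).erase j :=
    Finset.erase_right_comm
  have e4 : (∏ m, lam m) = lam i * aa lam i :=
    (Finset.mul_prod_erase _ _ (Finset.mem_univ i)).symm
  rw [e1, e2, e3, e4, e1]
  ring

lemma I2 (hn : 2 ≤ n) :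
    (∑ i, aa lam i) ^ 2 - (∑ i, (aa lam i) ^ 2)
      = 2 * Svec n (n - 2) lam * Svec n n lam := by
  have expand : (∑ i, aa lam i) ^ 2
      = (∑ i, (aa lam i) ^ 2)
        + ∑ i, ∑ j ∈ Finset.univ.erase i, aa lam i * aa lam j := by
    rw [sq, Finset.sum_mul_sum]
    rw [← Finset.sum_add_distrib]
    apply Finset.sum_congr rfl
    intro i _
    rw [← Finset.add_sum_erase _ (fun j => aa lam i * aa lam j) (Finset.mem_univ i), sq]
  have inner : ∀ i, ∑ j ∈ Finset.univ.erase i, aa lam i * aa lam j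
      = (∏ m, lam m) * ∑ j ∈ Finset.univ.erase i,
          ∏ m ∈ (Finset.univ.erase i).erase j, lam m := by
    intro i
    rw [Finset.mul_sum]
    apply Finset.sum_congr rfl
    intro j hj
    exact aa_mul_aa lam (Finset.mem_erase.1 hj).1
  rw [expand]
  have : ∑ i, ∑ j ∈ Finset.univ.erase i, aa lam i * aa lam j
      = (∏ m, lam m) * (2 * Svec n (n - 2) lam) := by
    rw [Finset.sum_congr rfl (fun i _ => inner i), ← Finset.mul_sum, D2 lam hn]
  rw [this, svec_top]
  ring

lemma CS :
    2 * ((n : ℝ) * (∑ i, (aa lam i) ^ 2) - (∑ i, aa lam i) ^ 2)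
      = ∑ i, ∑ j, (aa lam i - aa lam j) ^ 2 := by
  set S := ∑ j, aa lam j with hS
  set T := ∑ j, (aa lam j) ^ 2 with hT
  have h : ∀ i : Fin n, ∑ j, (aa lam i - aa lam j) ^ 2
      = (n : ℝ) * (aa lam i) ^ 2 - 2 * S * aa lam i + T := by
    intro i
    have e : ∀ j : Fin n, (aa lam i - aa lam j) ^ 2
        = (aa lam i) ^ 2 - 2 * aa lam i * aa lam j + (aa lam j) ^ 2 := fun j => by ring
    rw [Finset.sum_congr rfl (fun j _ => e j), Finset.sum_add_distrib,
      Finset.sum_sub_distrib, Finset.sum_const, Finset.card_univ, Fintype.card_fin,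
      ← Finset.mul_sum, ← hS, ← hT, nsmul_eq_mul]
    ring
  rw [Finset.sum_congr rfl (fun i _ => h i), Finset.sum_add_distrib, Finset.sum_sub_distrib,
    ← Finset.mul_sum, ← Finset.mul_sum, ← hT, Finset.sum_const, Finset.card_univ,
    Fintype.card_fin, nsmul_eq_mul]
  ring

lemma base_ineq (hn : 2 ≤ n) :
    2 * (n : ℝ) * Svec n (n - 2) lam * Svec n n lam
      ≤ ((n : ℝ) - 1) * (Svec n (n - 1) lam) ^ 2 := by
  have h1 := I1 lam (by omega)
  have h2 := I2 lam hn
  have h3 := CS lam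
  have h4 : (0:ℝ) ≤ ∑ i, ∑ j, (aa lam i - aa lam j) ^ 2 :=
    Finset.sum_nonneg fun i _ => Finset.sum_nonneg fun j _ => sq_nonneg _
  have h5 : (n : ℝ) * ((∑ i, aa lam i) ^ 2 - ∑ i, (aa lam i) ^ 2)
      = (n : ℝ) * (2 * Svec n (n - 2) lam * Svec n n lam) := by rw [h2]
  rw [← h1]
  linarith [h3, h4, h5]

lemma base_eq (hn : 2 ≤ n)
    (h : 2 * (n : ℝ) * Svec n (n - 2) lam * Svec n n lam
      = ((n : ℝ) - 1) * (Svec n (n - 1) lam) ^ 2)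
    (h0 : Svec n n lam ≠ 0) : ∀ i j, lam i = lam j := by
  have h1 := I1 lam (by omega)
  have h2 := I2 lam hn
  have h3 := CS lam
  have h5 : (n : ℝ) * ((∑ i, aa lam i) ^ 2 - ∑ i, (aa lam i) ^ 2)
      = (n : ℝ) * (2 * Svec n (n - 2) lam * Svec n n lam) := by rw [h2]
  rw [← h1] at h
  have hzero : ∑ i, ∑ j, (aa lam i - aa lam j) ^ 2 = 0 := by linarith [h3, h5]
  have haa : ∀ i j : Fin n, aa lam i = aa lam j := by
    intro i j
    have hnn : ∀ i ∈ (Finset.univ : Finset (Fin n)),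
        (0:ℝ) ≤ ∑ j, (aa lam i - aa lam j) ^ 2 :=
      fun i _ => Finset.sum_nonneg fun j _ => sq_nonneg _
    have hi := (Finset.sum_eq_zero_iff_of_nonneg hnn).1 hzero i (Finset.mem_univ i)
    have hij := (Finset.sum_eq_zero_iff_of_nonneg
      (fun j _ => sq_nonneg (aa lam i - aa lam j))).1 hi j (Finset.mem_univ j)
    have := pow_eq_zero_iff (n := 2) (by norm_num) |>.1 hij
    linarith [this]
  intro i j
  have hprod : ∀ m : Fin n, lam m * aa lam m = Svec n n lam := by
    intro m
    rw [svec_top, aa, Finset.mul_prod_erase _ _ (Finset.mem_univ m)]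
  have hne : aa lam i ≠ 0 := by
    intro hz
    apply h0
    rw [← hprod i, hz, mul_zero]
  have : lam i * aa lam i = lam j * aa lam i := by
    rw [hprod i, haa i j, hprod j]
  exact mul_right_cancel₀ hne this

end MacBase

def psym (M : Multiset ℝ) (j : ℕ) : ℝ :=
  M.esymm j / ((Multiset.card M).choose j : ℝ)

lemma psym_map (n j : ℕ) (lam : Fin n → ℝ) :
    psym (Multiset.map lam Finset.univ.val) j = Svec n j lam / (n.choose j : ℝ) := by
  rw [psym, card_map_univ, svec_eq_esymm]

lemma exists_enum (M : Multiset ℝ) (n : ℕ) (h : Multiset.card M = n) :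
    ∃ lam : Fin n → ℝ, M = Multiset.map lam Finset.univ.val := by
  subst h
  have hl : M.toList.length = Multiset.card M := Multiset.length_toList M
  refine ⟨fun i => M.toList.get (Fin.cast hl.symm i), ?_⟩
  rw [Fin.univ_val_map]
  have : (List.ofFn fun i => M.toList.get (Fin.cast hl.symm i)) = M.toList := by
    apply List.ext_getElem
    · simp [hl]
    · intro i h1 h2
      simp
  rw [this, Multiset.coe_toList]



lemma choose_identity {n j : ℕ} (hn : 1 ≤ n) :
    (n - j) * n.choose j = n * (n - 1).choose j := by
  have h1 := Nat.add_one_mul_choose_eq (n - 1) j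
  have hs : n - 1 + 1 = n := by omega
  rw [hs] at h1
  have h2 := Nat.choose_succ_right_eq n j
  calc (n - j) * n.choose j = n.choose j * (n - j) := by ring
    _ = n.choose (j + 1) * (j + 1) := h2.symm
    _ = n * (n - 1).choose j := h1.symm


lemma deriv_step (n : ℕ) (hn : 2 ≤ n) (M : Multiset ℝ) (hM : Multiset.card M = n) :
    ∃ N : Multiset ℝ, Multiset.card N = n - 1 ∧
      (∀ j, j ≤ n - 1 → (n : ℝ) * N.esymm j = ((n - j : ℕ) : ℝ) * M.esymm j) ∧
      (∀ c : ℝ, 3 ≤ n → (∀ b ∈ N, b = c) → ∀ a ∈ M, a = c) := by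
  set f := (M.map fun a => X - C a).prod with hf
  have hmonic : f.Monic := monic_multiset_prod_of_monic _ _ fun a _ => monic_X_sub_C a
  have hdeg : f.natDegree = n := by
    rw [hf, natDegree_multiset_prod_X_sub_C_eq_card, hM]
  have hroots : f.roots = M := roots_multiset_prod_X_sub_C M
  set g := derivative f with hg
  have hgtop : g.coeff (n - 1) = (n : ℝ) := by
    rw [hg, Polynomial.coeff_derivative]
    have h1 : n - 1 + 1 = n := by omega
    rw [h1]
    have h2 : f.coeff n = 1 := by
      have := hmonic.coeff_natDegree
      rwa [hdeg] at this
    rw [h2, one_mul, Nat.cast_sub (by omega : 1 ≤ n)]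
    ring
  have hgdeg : g.natDegree = n - 1 := by
    refine le_antisymm (by have := natDegree_derivative_le f; rw [hdeg] at this; exact this) ?_
    apply le_natDegree_of_ne_zero
    rw [hgtop]
    positivity
  have hcard : Multiset.card g.roots = n - 1 := by
    refine le_antisymm (hgdeg ▸ card_roots' g) ?_
    have h := Polynomial.card_roots_le_derivative f
    rw [hroots, hM, ← hg] at h
    omega
  have hglead : g.leadingCoeff = (n : ℝ) := by
    rw [Polynomial.leadingCoeff, hgdeg, hgtop]
  have hgprod : Polynomial.C (n : ℝ) * (g.roots.map fun a => X - C a).prod = g := by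
    rw [← hglead]
    exact Polynomial.C_leadingCoeff_mul_prod_multiset_X_sub_C (hcard.trans hgdeg.symm)
  refine ⟨g.roots, hcard, ?_, ?_⟩
  · intro j hj
    have hj1 : n - 1 - j + 1 = n - j := by omega
    have hjn : n - j ≤ n := by omega
    have hcm : n - j ≤ Multiset.card M := by omega
    have way1 : g.coeff (n - 1 - j)
        = (-1 : ℝ) ^ j * M.esymm j * ((n - j : ℕ) : ℝ) := by
      rw [hg, Polynomial.coeff_derivative, hj1]
      have := Multiset.prod_X_sub_C_coeff M hcm
      rw [← hf] at this
      rw [this, hM]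
      have hj2 : n - (n - j) = j := by omega
      rw [hj2]
      have hcast : ((n - 1 - j : ℕ) : ℝ) + 1 = ((n - j : ℕ) : ℝ) := by
        exact_mod_cast congrArg (Nat.cast : ℕ → ℝ) hj1
      rw [hcast]
    have way2 : g.coeff (n - 1 - j) = (n : ℝ) * ((-1 : ℝ) ^ j * g.roots.esymm j) := by
      conv_lhs => rw [← hgprod]
      rw [Polynomial.coeff_C_mul]
      have hle : n - 1 - j ≤ Multiset.card g.roots := by omega
      rw [Multiset.prod_X_sub_C_coeff _ hle, hcard]
      have : n - 1 - (n - 1 - j) = j := by omega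
      rw [this]
    have key : (-1 : ℝ) ^ j * ((n : ℝ) * g.roots.esymm j)
        = (-1 : ℝ) ^ j * (((n - j : ℕ) : ℝ) * M.esymm j) := by
      have := way1.symm.trans way2
      calc (-1 : ℝ) ^ j * ((n : ℝ) * g.roots.esymm j)
          = (n : ℝ) * ((-1 : ℝ) ^ j * g.roots.esymm j) := by ring
        _ = (-1 : ℝ) ^ j * M.esymm j * ((n - j : ℕ) : ℝ) := this.symm
        _ = (-1 : ℝ) ^ j * (((n - j : ℕ) : ℝ) * M.esymm j) := by ring
    have hne : ((-1 : ℝ) ^ j) ≠ 0 := by positivity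
    exact mul_left_cancel₀ hne key
  · intro c h3 hc
    have hN : g.roots = Multiset.replicate (n - 1) c := by
      rw [← hcard]
      exact Multiset.eq_replicate_card.2 hc
    have hg2 : g = Polynomial.C (n : ℝ) * (X - C c) ^ (n - 1) := by
      rw [← hgprod, hN, Multiset.map_replicate, Multiset.prod_replicate]
    have hderiv0 : derivative (f - (X - C c) ^ n) = 0 := by
      rw [derivative_sub, Polynomial.derivative_X_sub_C_pow, ← hg, hg2]
      ring
    have hC := Polynomial.eq_C_of_derivative_eq_zero hderiv0
    set d := (f - (X - C c) ^ n).coeff 0 with hd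
    have hfd : f = (X - C c) ^ n + Polynomial.C d := by
      rw [← hC]; ring
    have hroot : ∀ a ∈ M, (a - c) ^ n + d = 0 := by
      intro a ha
      have h1 : f.IsRoot a := Polynomial.isRoot_of_mem_roots (by rw [hroots]; exact ha)
      have h2 := h1
      rw [hfd] at h2
      simpa using h2
    by_cases hdz : d = 0
    · intro a ha
      have := hroot a ha
      rw [hdz, add_zero, pow_eq_zero_iff (by omega : n ≠ 0)] at this
      exact sub_eq_zero.1 this
    · exfalso
      have hcM : ∀ a ∈ M, a ≠ c := by
        intro a ha h
        apply hdz
        have := hroot a ha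
        rw [h, sub_self, zero_pow (by omega : n ≠ 0), zero_add] at this
        exact this
      -- no repeated roots
      have hnodup : M.Nodup := by
        rw [Multiset.nodup_iff_count_le_one]
        intro a
        by_cases haM : a ∈ M
        · by_contra hcount
          push_neg at hcount
          have h2 : (X - C a) ^ 2 ∣ f := by
            have hdvd := Polynomial.pow_rootMultiplicity_dvd f a
            refine dvd_trans (pow_dvd_pow _ ?_) hdvd
            rw [← Polynomial.count_roots, hroots]
            omega
          obtain ⟨q, hq⟩ := h2
          have hga : g.eval a = 0 := by
            rw [hg, hq, Polynomial.derivative_mul, Polynomial.derivative_X_sub_C_sq]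
            simp
          rw [hg2] at hga
          have h8 : (n : ℝ) * (a - c) ^ (n - 1) = 0 := by simpa using hga
          have h9 : (a - c) ^ (n - 1) = 0 := by
            rcases mul_eq_zero.1 h8 with h | h
            · exact absurd h (Nat.cast_ne_zero.2 (by omega))
            · exact h
          have := pow_eq_zero_iff (show n - 1 ≠ 0 by omega) |>.1 h9
          exact hcM a haM (sub_eq_zero.1 this)
        · rw [Multiset.count_eq_zero_of_notMem haM]; omega
      obtain ⟨u, hu⟩ := Multiset.card_pos_iff_exists_mem.1 (by omega : 0 < Multiset.card M)
      have habs : ∀ a ∈ M, a = u ∨ a = 2 * c - u := by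
        intro a ha
        have h1 : (a - c) ^ n = (u - c) ^ n := by
          have e1 := hroot a ha; have e2 := hroot u hu; linarith
        have h2 : |a - c| = |u - c| := by
          have : |a - c| ^ n = |u - c| ^ n := by
            rw [← abs_pow, ← abs_pow, h1]
          exact (pow_left_inj₀ (abs_nonneg _) (abs_nonneg _) (by omega : n ≠ 0)).1 this
        rcases abs_eq_abs.1 h2 with h | h
        · left; linarith
        · right; linarith
      have hsub : M.toFinset ⊆ ({u, 2 * c - u} : Finset ℝ) := by
        intro a ha
        rcases habs a (Multiset.mem_toFinset.1 ha) with h | h <;> simp [h]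
      have hcard3 : M.toFinset.card = n :=
        (Multiset.toFinset_card_eq_card_iff_nodup.2 hnodup).trans hM
      have hle := Finset.card_le_card hsub
      have h2 : ({u, 2 * c - u} : Finset ℝ).card ≤ 2 :=
        (Finset.card_insert_le _ _).trans (by simp)
      omega

lemma psym_step (n : ℕ) (hn : 2 ≤ n) (M : Multiset ℝ) (hM : Multiset.card M = n) :
    ∃ N : Multiset ℝ, Multiset.card N = n - 1 ∧
      (∀ j, j ≤ n - 1 → psym N j = psym M j) ∧
      (∀ c : ℝ, 3 ≤ n → (∀ b ∈ N, b = c) → ∀ a ∈ M, a = c) := by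
  obtain ⟨N, hcard, hrel, hconst⟩ := deriv_step n hn M hM
  refine ⟨N, hcard, ?_, hconst⟩
  intro j hj
  have hjn : j ≤ n := by omega
  have hC1 : ((n - 1).choose j : ℝ) ≠ 0 := by
    exact_mod_cast (Nat.choose_pos hj).ne'
  have hC2 : (n.choose j : ℝ) ≠ 0 := by
    exact_mod_cast (Nat.choose_pos hjn).ne'
  have hn0 : (n : ℝ) ≠ 0 := Nat.cast_ne_zero.2 (by omega)
  rw [psym, psym, hcard, hM, div_eq_div_iff hC1 hC2]
  have hid : (((n - j) * n.choose j : ℕ) : ℝ) = ((n * (n - 1).choose j : ℕ) : ℝ) :=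
    congrArg (Nat.cast : ℕ → ℝ) (choose_identity (by omega))
  push_cast at hid
  have h := hrel j hj
  apply mul_left_cancel₀ hn0
  calc (n : ℝ) * (N.esymm j * (n.choose j : ℝ))
      = ((n : ℝ) * N.esymm j) * (n.choose j : ℝ) := by ring
    _ = (((n - j : ℕ) : ℝ) * M.esymm j) * (n.choose j : ℝ) := by rw [h]
    _ = M.esymm j * (((n - j : ℕ) : ℝ) * (n.choose j : ℝ)) := by ring
    _ = M.esymm j * ((n : ℝ) * ((n - 1).choose j : ℝ)) := by
        rw [show (((n - j : ℕ) : ℝ) * (n.choose j : ℝ)) = ((n : ℝ) * ((n - 1).choose j : ℝ)) from hid]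
    _ = (n : ℝ) * (M.esymm j * ((n - 1).choose j : ℝ)) := by ring

lemma psym_base_indices (n : ℕ) (hn : 2 ≤ n) (lam : Fin n → ℝ) :
    psym (Multiset.map lam Finset.univ.val) (n - 2)
        = Svec n (n - 2) lam / ((n : ℝ) * ((n : ℝ) - 1) / 2) ∧
      psym (Multiset.map lam Finset.univ.val) (n - 1) = Svec n (n - 1) lam / (n : ℝ) ∧
      psym (Multiset.map lam Finset.univ.val) n = Svec n n lam := by
  refine ⟨?_, ?_, ?_⟩
  · rw [psym_map]
    have h1 : n.choose (n - 2) = n.choose 2 := by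
      have := Nat.choose_symm (show 2 ≤ n from hn)
      simpa using this
    rw [h1, Nat.cast_choose_two]
  · rw [psym_map]
    have h1 : n.choose (n - 1) = n.choose 1 := by
      have := Nat.choose_symm (show 1 ≤ n by omega)
      simpa using this
    rw [h1, Nat.choose_one_right]
  · rw [psym_map, Nat.choose_self]
    simp

lemma newton_ineq (n : ℕ) : ∀ M : Multiset ℝ, Multiset.card M = n →
    ∀ j, 1 ≤ j → j + 1 ≤ n → psym M (j - 1) * psym M (j + 1) ≤ psym M j ^ 2 := by
  induction n using Nat.strong_induction_on with
  | _ n ih =>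
    intro M hM j hj1 hj2
    by_cases hbase : j + 1 = n
    · -- base case
      obtain ⟨lam, hlam⟩ := exists_enum M n hM
      subst hlam
      have hn2 : 2 ≤ n := by omega
      obtain ⟨e1, e2, e3⟩ := psym_base_indices n hn2 lam
      have hj0 : j - 1 = n - 2 := by omega
      have hjj : j = n - 1 := by omega
      have hjp : j + 1 = n := hbase
      rw [hj0, hjp, hjj, e1, e2, e3]
      have hbi := MacBase.base_ineq lam hn2
      have hnpos : (0 : ℝ) < n := by positivity
      have hn1 : (1 : ℝ) < (n : ℝ) := by exact_mod_cast (by omega : 1 < n)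
      rw [div_pow, div_mul_eq_mul_div, div_le_div_iff₀ (by nlinarith) (by nlinarith)]
      nlinarith [mul_le_mul_of_nonneg_left hbi
        (le_of_lt (by positivity : (0:ℝ) < (n:ℝ)/4))]
    · -- inductive step
      obtain ⟨N, hcard, hpres, _⟩ := psym_step n (by omega) M hM
      rw [← hpres (j - 1) (by omega), ← hpres j (by omega), ← hpres (j + 1) (by omega)]
      exact ih (n - 1) (by omega) N hcard j hj1 (by omega)

lemma main_eq (n : ℕ) : ∀ M : Multiset ℝ, Multiset.card M = n →
    ∀ k, 1 ≤ k → k + 1 ≤ n →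
    psym M (k - 1) * psym M (k + 1) = psym M k ^ 2 →
    psym M (k + 1) ≠ 0 →
    ∀ a ∈ M, ∀ b ∈ M, a = b := by
  induction n using Nat.strong_induction_on with
  | _ n ih =>
    intro M hM k hk1 hk2 heq hne
    by_cases hbase : k + 1 = n
    · obtain ⟨lam, hlam⟩ := exists_enum M n hM
      subst hlam
      have hn2 : 2 ≤ n := by omega
      obtain ⟨e1, e2, e3⟩ := psym_base_indices n hn2 lam
      have hj0 : k - 1 = n - 2 := by omega
      have hjj : k = n - 1 := by omega
      rw [hj0, hbase, hjj, e1, e2, e3] at heq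
      rw [hbase, e3] at hne
      have hD : Svec n n lam ≠ 0 := hne
      have hnpos : (0 : ℝ) < n := by positivity
      have hn1 : (1 : ℝ) < (n : ℝ) := by exact_mod_cast (by omega : 1 < n)
      have heq2 : 2 * (n : ℝ) * Svec n (n - 2) lam * Svec n n lam
          = ((n : ℝ) - 1) * (Svec n (n - 1) lam) ^ 2 := by
        field_simp at heq
        rw [div_eq_iff (show (n:ℝ) - 1 ≠ 0 by linarith)] at heq
        apply mul_left_cancel₀ (show (n:ℝ) ≠ 0 by positivity)
        linear_combination (n:ℝ) * heq
      have hall := MacBase.base_eq lam hn2 heq2 hD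
      intro a ha b hb
      obtain ⟨i, _, rfl⟩ := Multiset.mem_map.1 ha
      obtain ⟨j', _, rfl⟩ := Multiset.mem_map.1 hb
      exact hall i j'
    · obtain ⟨N, hcard, hpres, hconst⟩ := psym_step n (by omega) M hM
      have hNall : ∀ a ∈ N, ∀ b ∈ N, a = b := by
        apply ih (n - 1) (by omega) N hcard k hk1 (by omega)
        · rw [hpres (k - 1) (by omega), hpres k (by omega), hpres (k + 1) (by omega)]
          exact heq
        · rw [hpres (k + 1) (by omega)]
          exact hne
      obtain ⟨c, hc⟩ := Multiset.card_pos_iff_exists_mem.1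
        (show 0 < Multiset.card N by omega)
      have hNc : ∀ b ∈ N, b = c := fun b hb => hNall b hb c hc
      have hMc := hconst c (by omega) hNc
      intro a ha b hb
      rw [hMc a ha, hMc b hb]


/-- Equality case: if `λ ∈ Γ_k`, `S_k/C_n^k = S_l/C_n^l` and `S_{k+1}/C_n^{k+1} = S_k/C_n^k`,
then all the components of `λ` are equal. -/
theorem maclaurin_equality_case
    (n k l : ℕ) (hn : 2 ≤ n) (hlk : l < k) (hkn : k ≤ n - 1)
    (lam : Fin n → ℝ) (hlam : lam ∈ GardingCone n k)
    (heq : Svec n k lam / (n.choose k : ℝ) = Svec n l lam / (n.choose l : ℝ))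
    (heq2 : Svec n (k + 1) lam / (n.choose (k + 1) : ℝ)
      = Svec n k lam / (n.choose k : ℝ)) :
    ∀ i j : Fin n, lam i = lam j := by
  have hgc : ∀ i : ℕ, 1 ≤ i → i ≤ k → 0 < Svec n i lam := hlam
  set M := Multiset.map lam Finset.univ.val with hMdef
  have hM : Multiset.card M = n := card_map_univ n lam
  have hP : ∀ j, psym M j = Svec n j lam / (n.choose j : ℝ) := fun j => psym_map n j lam
  have hk1 : 1 ≤ k := by omega
  have hkn' : k + 1 ≤ n := by omega
  have hpos : ∀ j, j ≤ k → 0 < psym M j := by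
    intro j hj
    rcases Nat.eq_zero_or_pos j with rfl | hj1
    · rw [hP, svec_zero]
      norm_num
    · rw [hP]
      apply div_pos (hgc j hj1 hj)
      exact_mod_cast Nat.choose_pos (by omega : j ≤ n)
  have hPk : psym M (k + 1) = psym M k := by rw [hP, hP]; exact heq2
  have hPl : psym M k = psym M l := by rw [hP, hP]; exact heq
  have mono : ∀ d, d ≤ k → psym M (k - d) ≤ psym M (k - d + 1) := by
    intro d
    induction d with
    | zero =>
      intro _
      simpa using le_of_eq hPk.symm
    | succ d ihd =>
      intro hd
      have ih2 := ihd (by omega)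
      have hje : k - d = k - (d + 1) + 1 := by omega
      set j := k - (d + 1) with hjdef
      rw [hje] at ih2
      have hnewton := newton_ineq n M hM (j + 1) (by omega) (by omega)
      have hs : j + 1 - 1 = j := by omega
      rw [hs] at hnewton
      have hp1 : 0 < psym M (j + 1) := hpos (j + 1) (by omega)
      have hp2 : 0 < psym M (j + 1 + 1) := lt_of_lt_of_le hp1 ih2
      have h1 : psym M j * psym M (j + 1 + 1) ≤ psym M (j + 1) * psym M (j + 1 + 1) := by
        nlinarith [hnewton, ih2, hp1]
      exact le_of_mul_le_mul_right h1 hp2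
  have mono' : ∀ j, j ≤ k → psym M j ≤ psym M (j + 1) := by
    intro j hj
    have := mono (k - j) (by omega)
    rwa [show k - (k - j) = j by omega] at this
  have chain : ∀ j, l ≤ j → j ≤ k → psym M l ≤ psym M j := by
    intro j
    induction j with
    | zero =>
      intro h1 _
      have : l = 0 := by omega
      rw [this]
    | succ j ihj =>
      intro h1 h2
      rcases Nat.lt_or_ge l (j + 1) with hlt | hge
      · exact (ihj (by omega) (by omega)).trans (mono' j (by omega))
      · have : l = j + 1 := by omega
        rw [this]
  have hPk1' : psym M (k - 1) = psym M k := by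
    refine le_antisymm ?_ ?_
    · have := mono' (k - 1) (by omega)
      rwa [show k - 1 + 1 = k by omega] at this
    · rw [hPl]
      exact chain (k - 1) (by omega) (by omega)
  have heqN : psym M (k - 1) * psym M (k + 1) = psym M k ^ 2 := by
    rw [hPk1', hPk]; ring
  have hneN : psym M (k + 1) ≠ 0 := by
    rw [hPk]; exact (hpos k le_rfl).ne'
  have hall := main_eq n M hM k hk1 hkn' heqN hneN
  intro i j
  exact hall (lam i) (Multiset.mem_map_of_mem lam (Finset.mem_univ_val i))
    (lam j) (Multiset.mem_map_of_mem lam (Finset.mem_univ_val j))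


end
end

section
/- Let n ≥ 1 and let k be an integer with 1 ≤ k ≤ n. For every n×n real matrix A = (a_{ij}) and all indices 1 ≤ i, j ≤ n, one has S_k^{ij}(A) = S_{k−1}(A) δ_{ij} − Σ_{l=1}^{n} S_{k−1}^{il}(A) a_{jl}, where δ_{ij} is the Kronecker delta. -/
open scoped BigOperators

noncomputable section

/-- Sum of the k×k principal minors of A (= k-th elementary symmetric function of the
eigenvalues of A); by definition `Smat n 0 A = 1`. -/
def Smat (n k : ℕ) (A : Matrix (Fin n) (Fin n) ℝ) : ℝ :=
  ∑ s ∈ Finset.powersetCard k (Finset.univ : Finset (Fin n)),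
    (A.submatrix (fun i : {a // a ∈ s} => (i : Fin n)) (fun j : {a // a ∈ s} => (j : Fin n))).det

/-- `S_k^{ij}(A) = ∂ S_k(A) / ∂ a_{ij}`, the partial derivative of the polynomial map
`A ↦ S_k(A)` with respect to the `(i,j)` entry.  Note `Sij n 0 A i j = 0`, matching the
convention `S_0^{il}(A) := 0`. -/
def Sij (n k : ℕ) (A : Matrix (Fin n) (Fin n) ℝ) (i j : Fin n) : ℝ :=
  deriv (fun t : ℝ => Smat n k (A + t • Matrix.single i j (1:ℝ))) 0

namespace SijAux

variable {n : ℕ}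

/-- The principal submatrix of `A` on the index set `s`. -/
def msub (A : Matrix (Fin n) (Fin n) ℝ) (s : Finset (Fin n)) :
    Matrix {a // a ∈ s} {a // a ∈ s} ℝ :=
  A.submatrix (fun a => (a : Fin n)) (fun a => (a : Fin n))

@[simp] lemma msub_apply (A : Matrix (Fin n) (Fin n) ℝ) (s : Finset (Fin n))
    (a b : {a // a ∈ s}) : msub A s a b = A (a : Fin n) (b : Fin n) := rfl

/-- The principal minor of `A` on the index set `s`. -/
def dsub (A : Matrix (Fin n) (Fin n) ℝ) (s : Finset (Fin n)) : ℝ := (msub A s).det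

lemma Smat_eq (n k : ℕ) (A : Matrix (Fin n) (Fin n) ℝ) :
    Smat n k A = ∑ s ∈ Finset.powersetCard k (Finset.univ : Finset (Fin n)), dsub A s := rfl

/-- Cofactor-type determinant: the principal submatrix on `s` with row `i` replaced by the
standard basis vector `e_j`; zero if `i ∉ s` or `j ∉ s`. -/
def cdet (A : Matrix (Fin n) (Fin n) ℝ) (s : Finset (Fin n)) (i j : Fin n) : ℝ :=
  if h : i ∈ s ∧ j ∈ s then
    ((msub A s).updateRow ⟨i, h.1⟩ (Pi.single ⟨j, h.2⟩ 1)).det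
  else 0

/-- The principal submatrix on `s` with row `i` replaced by (the restriction of) row `j`
of `A`; zero if `i ∉ s`. -/
def rdet (A : Matrix (Fin n) (Fin n) ℝ) (s : Finset (Fin n)) (i j : Fin n) : ℝ :=
  if h : i ∈ s then
    ((msub A s).updateRow ⟨i, h⟩ (fun b => A j (b : Fin n))).det
  else 0

/-- Multilinearity of the determinant in one row. -/
lemma det_updateRow_lin {m α : Type*} [DecidableEq m] [Fintype m]
    (M : Matrix m m ℝ) (i : m) (t : Finset α) (c : α → ℝ) (u : α → m → ℝ) :
    (M.updateRow i (∑ a ∈ t, c a • u a)).det = ∑ a ∈ t, c a * (M.updateRow i (u a)).det := by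
  induction t using Finset.cons_induction with
  | empty =>
    simp only [Finset.sum_empty]
    exact Matrix.det_eq_zero_of_row_eq_zero i (by simp)
  | cons a t ha ih =>
    rw [Finset.sum_cons, Matrix.det_updateRow_add, Matrix.det_updateRow_smul, ih,
      Finset.sum_cons]

/-- The derivative defining `Sij` computed explicitly. -/
lemma Sij_eq (n k : ℕ) (A : Matrix (Fin n) (Fin n) ℝ) (i j : Fin n) :
    Sij n k A i j
      = ∑ s ∈ Finset.powersetCard k (Finset.univ : Finset (Fin n)), cdet A s i j := by
  set C : ℝ := ∑ s ∈ Finset.powersetCard k (Finset.univ : Finset (Fin n)), cdet A s i j with hC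
  have key : ∀ t : ℝ, Smat n k (A + t • Matrix.single i j (1:ℝ))
      = Smat n k A + t * C := by
    intro t
    rw [hC, Smat_eq, Smat_eq, Finset.mul_sum, ← Finset.sum_add_distrib]
    show ∑ s ∈ Finset.powersetCard k (Finset.univ : Finset (Fin n)),
        dsub (A + t • Matrix.single i j (1:ℝ)) s = _
    refine Finset.sum_congr rfl fun s _ => ?_
    by_cases h : i ∈ s ∧ j ∈ s
    · have hmat : msub (A + t • Matrix.single i j (1:ℝ)) s
          = (msub A s).updateRow ⟨i, h.1⟩
              ((msub A s) ⟨i, h.1⟩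
                + t • (Pi.single (⟨j, h.2⟩ : {a // a ∈ s}) (1:ℝ) : {a // a ∈ s} → ℝ)) := by
        ext a b
        by_cases ha : a = (⟨i, h.1⟩ : {a // a ∈ s})
        · subst ha
          simp only [msub_apply, Matrix.add_apply, Matrix.smul_apply, Matrix.updateRow_self,
            Pi.add_apply, Pi.smul_apply, smul_eq_mul]
          congr 1
          rw [Matrix.single, Matrix.of_apply, Pi.single_apply]
          by_cases hb : (b : Fin n) = j
          · rw [if_pos ⟨rfl, hb.symm⟩, if_pos (Subtype.ext hb)]
          · rw [if_neg (fun hc => hb hc.2.symm), if_neg (fun hc => hb (congrArg Subtype.val hc))]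
        · have ha' : (a : Fin n) ≠ i := fun hc => ha (Subtype.ext hc)
          rw [Matrix.updateRow_ne ha]
          simp only [msub_apply, Matrix.add_apply, Matrix.smul_apply, smul_eq_mul]
          rw [Matrix.single, Matrix.of_apply, if_neg (fun hc => ha' hc.1.symm),
            mul_zero, add_zero]
      rw [dsub, hmat, Matrix.det_updateRow_add, Matrix.det_updateRow_smul,
        Matrix.updateRow_eq_self, cdet, dif_pos h]
      rfl
    · have hmat : msub (A + t • Matrix.single i j (1:ℝ)) s = msub A s := by
        ext a b
        simp only [msub_apply, Matrix.add_apply, Matrix.smul_apply, smul_eq_mul]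
        rw [Matrix.single, Matrix.of_apply, if_neg, mul_zero, add_zero]
        rintro ⟨rfl, rfl⟩
        exact h ⟨a.2, b.2⟩
      rw [dsub, hmat, cdet, dif_neg h, mul_zero, add_zero]
      rfl
  rw [Sij]
  have hfun : (fun t : ℝ => Smat n k (A + t • Matrix.single i j (1:ℝ)))
      = fun t : ℝ => Smat n k A + t * C := funext key
  rw [hfun]
  have hderiv : HasDerivAt (fun t : ℝ => Smat n k A + t * C) C 0 := by
    simpa using ((hasDerivAt_id (0:ℝ)).mul_const C).const_add (Smat n k A)
  exact hderiv.deriv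

/-- Equivalence splitting off the element `i` from `s`. -/
def eraseEquiv (s : Finset (Fin n)) (i : Fin n) (hi : i ∈ s) :
    {a // a ∈ s.erase i} ⊕ Unit ≃ {a // a ∈ s} where
  toFun := Sum.elim (fun a => ⟨a.1, Finset.mem_of_mem_erase a.2⟩) (fun _ => ⟨i, hi⟩)
  invFun x := if h : (x : Fin n) = i then Sum.inr ()
    else Sum.inl ⟨x.1, Finset.mem_erase.2 ⟨h, x.2⟩⟩
  left_inv := by
    rintro (⟨a, ha⟩ | ⟨⟩)
    · have : a ≠ i := (Finset.mem_erase.1 ha).1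
      simp [this]
    · simp
  right_inv := by
    rintro ⟨x, hx⟩
    by_cases h : x = i
    · subst h; simp
    · simp [h]

/-- Laplace-type reduction: if row `i` of `M` is the standard basis vector `e_i`, then the
determinant of `M` is the minor obtained by deleting row and column `i`. -/
lemma det_single_row {s : Finset (Fin n)} {i : Fin n} (hi : i ∈ s)
    (M : Matrix {a // a ∈ s} {a // a ∈ s} ℝ)
    (hrow : M ⟨i, hi⟩ = Pi.single ⟨i, hi⟩ 1) :
    M.det = (M.submatrix
      (fun a : {a // a ∈ s.erase i} => (⟨a.1, Finset.mem_of_mem_erase a.2⟩ : {a // a ∈ s}))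
      (fun a : {a // a ∈ s.erase i} => (⟨a.1, Finset.mem_of_mem_erase a.2⟩ : {a // a ∈ s}))).det
    := by
  rw [← Matrix.det_submatrix_equiv_self (eraseEquiv s i hi) M]
  have hblocks : M.submatrix (eraseEquiv s i hi) (eraseEquiv s i hi)
      = Matrix.fromBlocks
          (M.submatrix
            (fun a : {a // a ∈ s.erase i} => (⟨a.1, Finset.mem_of_mem_erase a.2⟩ : {a // a ∈ s}))
            (fun a : {a // a ∈ s.erase i} => (⟨a.1, Finset.mem_of_mem_erase a.2⟩ : {a // a ∈ s})))
          (Matrix.of fun (a : {a // a ∈ s.erase i}) (_ : Unit) =>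
            M ⟨a.1, Finset.mem_of_mem_erase a.2⟩ ⟨i, hi⟩)
          (0 : Matrix Unit {a // a ∈ s.erase i} ℝ) (1 : Matrix Unit Unit ℝ) := by
    ext a b
    cases a with
    | inl a =>
      cases b with
      | inl b => rfl
      | inr b => rfl
    | inr a =>
      cases b with
      | inl b =>
        show M ⟨i, hi⟩ ⟨b.1, Finset.mem_of_mem_erase b.2⟩ = (0 : Matrix Unit {a // a ∈ s.erase i} ℝ) a b
        have hne : (⟨b.1, Finset.mem_of_mem_erase b.2⟩ : {a // a ∈ s}) ≠ ⟨i, hi⟩ :=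
          fun hc => (Finset.mem_erase.1 b.2).1 (congrArg Subtype.val hc)
        rw [hrow, Matrix.zero_apply, Pi.single_apply, if_neg hne]
      | inr b =>
        show M ⟨i, hi⟩ ⟨i, hi⟩ = (1 : Matrix Unit Unit ℝ) a b
        rw [hrow, Pi.single_eq_same, Matrix.one_apply_eq]
  rw [hblocks, Matrix.det_fromBlocks_zero₂₁, Matrix.det_one, mul_one]

lemma cdet_self {A : Matrix (Fin n) (Fin n) ℝ} {s : Finset (Fin n)} {i : Fin n} (hi : i ∈ s) :
    cdet A s i i = dsub A (s.erase i) := by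
  have hmat : ((msub A s).updateRow ⟨i, hi⟩ (Pi.single ⟨i, hi⟩ 1)).submatrix
      (fun a : {a // a ∈ s.erase i} => (⟨a.1, Finset.mem_of_mem_erase a.2⟩ : {a // a ∈ s}))
      (fun a : {a // a ∈ s.erase i} => (⟨a.1, Finset.mem_of_mem_erase a.2⟩ : {a // a ∈ s}))
      = msub A (s.erase i) := by
    ext a b
    have hne : (⟨a.1, Finset.mem_of_mem_erase a.2⟩ : {a // a ∈ s}) ≠ ⟨i, hi⟩ :=
      fun hc => (Finset.mem_erase.1 a.2).1 (congrArg Subtype.val hc)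
    show (msub A s).updateRow ⟨i, hi⟩ (Pi.single ⟨i, hi⟩ 1)
        ⟨a.1, Finset.mem_of_mem_erase a.2⟩ ⟨b.1, Finset.mem_of_mem_erase b.2⟩ = _
    rw [Matrix.updateRow_ne hne]
    rfl
  rw [cdet, dif_pos ⟨hi, hi⟩,
    det_single_row hi _ (Matrix.updateRow_self (M := msub A s)), hmat]
  rfl

lemma rdet_self {A : Matrix (Fin n) (Fin n) ℝ} {s : Finset (Fin n)} {i : Fin n} (hi : i ∈ s) :
    rdet A s i i = dsub A s := by
  rw [rdet, dif_pos hi]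
  have : (fun b : {a // a ∈ s} => A i (b : Fin n)) = msub A s ⟨i, hi⟩ := rfl
  rw [this, Matrix.updateRow_eq_self]
  rfl

lemma rdet_dup {A : Matrix (Fin n) (Fin n) ℝ} {s : Finset (Fin n)} {i j : Fin n}
    (hi : i ∈ s) (hj : j ∈ s) (hij : i ≠ j) : rdet A s i j = 0 := by
  rw [rdet, dif_pos hi]
  refine Matrix.det_zero_of_row_eq (M := (msub A s).updateRow ⟨i, hi⟩ (fun b => A j (b : Fin n)))
    (i := (⟨i, hi⟩ : {a // a ∈ s})) (j := ⟨j, hj⟩)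
    (fun hc => hij (congrArg Subtype.val hc)) ?_
  rw [Matrix.updateRow_self, Matrix.updateRow_ne
    (fun hc => hij (congrArg Subtype.val hc).symm)]
  rfl

lemma cdet_swap {A : Matrix (Fin n) (Fin n) ℝ} {s : Finset (Fin n)} {i j : Fin n}
    (hi : i ∈ s) (hj : j ∈ s) (hij : i ≠ j) :
    cdet A s i j = - rdet A (s.erase j) i j := by
  have hi' : i ∈ s.erase j := Finset.mem_erase.2 ⟨hij, hi⟩
  have hij' : (⟨i, hi⟩ : {a // a ∈ s}) ≠ ⟨j, hj⟩ :=
    fun hc => hij (congrArg Subtype.val hc)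
  rw [cdet, dif_pos ⟨hi, hj⟩, rdet, dif_pos hi']
  set M : Matrix {a // a ∈ s} {a // a ∈ s} ℝ :=
    (msub A s).updateRow ⟨i, hi⟩ (Pi.single ⟨j, hj⟩ 1) with hM
  set P : Matrix {a // a ∈ s} {a // a ∈ s} ℝ :=
    M.submatrix (Equiv.swap (⟨i, hi⟩ : {a // a ∈ s}) ⟨j, hj⟩) id with hP
  have e1 : P.det = - M.det := by
    rw [hP, Matrix.det_permute, Equiv.Perm.sign_swap hij']
    simp
  have hProw : P ⟨j, hj⟩ = Pi.single ⟨j, hj⟩ 1 := by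
    show M (Equiv.swap (⟨i, hi⟩ : {a // a ∈ s}) ⟨j, hj⟩ ⟨j, hj⟩) = _
    rw [Equiv.swap_apply_right, hM, Matrix.updateRow_self]
  have hmat : P.submatrix
      (fun a : {a // a ∈ s.erase j} => (⟨a.1, Finset.mem_of_mem_erase a.2⟩ : {a // a ∈ s}))
      (fun a : {a // a ∈ s.erase j} => (⟨a.1, Finset.mem_of_mem_erase a.2⟩ : {a // a ∈ s}))
      = (msub A (s.erase j)).updateRow ⟨i, hi'⟩ (fun b => A j (b : Fin n)) := by
    ext a b
    show M (Equiv.swap (⟨i, hi⟩ : {a // a ∈ s}) ⟨j, hj⟩ ⟨a.1, Finset.mem_of_mem_erase a.2⟩)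
        ⟨b.1, Finset.mem_of_mem_erase b.2⟩ = _
    by_cases ha : a = (⟨i, hi'⟩ : {a // a ∈ s.erase j})
    · subst ha
      rw [show (⟨(⟨i, hi'⟩ : {a // a ∈ s.erase j}).1, Finset.mem_of_mem_erase
          (⟨i, hi'⟩ : {a // a ∈ s.erase j}).2⟩ : {a // a ∈ s}) = ⟨i, hi⟩ from rfl,
        Equiv.swap_apply_left, hM, Matrix.updateRow_ne hij'.symm,
        Matrix.updateRow_self]
      rfl
    · have ha1 : (a : Fin n) ≠ i := fun hc => ha (Subtype.ext hc)
      have ha2 : (a : Fin n) ≠ j := (Finset.mem_erase.1 a.2).1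
      have haa : (⟨a.1, Finset.mem_of_mem_erase a.2⟩ : {a // a ∈ s}) ≠ ⟨i, hi⟩ :=
        fun hc => ha1 (congrArg Subtype.val hc)
      have hab : (⟨a.1, Finset.mem_of_mem_erase a.2⟩ : {a // a ∈ s}) ≠ ⟨j, hj⟩ :=
        fun hc => ha2 (congrArg Subtype.val hc)
      have hane : a ≠ (⟨i, hi'⟩ : {a // a ∈ s.erase j}) := ha
      rw [Equiv.swap_apply_of_ne_of_ne haa hab, hM, Matrix.updateRow_ne haa,
        Matrix.updateRow_ne hane]
      rfl
  have e2 : P.det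
      = ((msub A (s.erase j)).updateRow ⟨i, hi'⟩ (fun b => A j (b : Fin n))).det := by
    rw [det_single_row hj P hProw, hmat]
  rw [← e2, e1]
  ring

lemma row_expand (A : Matrix (Fin n) (Fin n) ℝ) (s : Finset (Fin n)) (i j : Fin n) :
    ∑ l : Fin n, cdet A s i l * A j l = rdet A s i j := by
  by_cases hi : i ∈ s
  · rw [rdet, dif_pos hi]
    have hv : (fun b : {a // a ∈ s} => A j (b : Fin n))
        = ∑ l : Fin n, A j l •
            (fun b : {a // a ∈ s} => if (b : Fin n) = l then (1:ℝ) else 0) := by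
      funext b
      rw [Finset.sum_apply]
      simp [mul_ite, Finset.sum_ite_eq]
    rw [hv, det_updateRow_lin]
    refine Finset.sum_congr rfl fun l _ => ?_
    rw [mul_comm]
    congr 1
    by_cases hl : l ∈ s
    · have hvec : (Pi.single (⟨l, hl⟩ : {a // a ∈ s}) (1:ℝ) : {a // a ∈ s} → ℝ)
          = fun b : {a // a ∈ s} => if (b : Fin n) = l then (1:ℝ) else 0 := by
        funext b
        rw [Pi.single_apply]
        by_cases hb : (b : Fin n) = l
        · rw [if_pos (Subtype.ext hb), if_pos hb]
        · rw [if_neg (fun hc => hb (congrArg Subtype.val hc)), if_neg hb]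
      rw [cdet, dif_pos ⟨hi, hl⟩, hvec]
    · rw [cdet, dif_neg (fun hc => hl hc.2)]
      refine (Matrix.det_eq_zero_of_row_eq_zero ⟨i, hi⟩ fun b => ?_).symm
      rw [Matrix.updateRow_self]
      show (if (b : Fin n) = l then (1:ℝ) else 0) = 0
      exact if_neg fun hc => hl (by rw [← hc]; exact b.2)
  · rw [rdet, dif_neg hi]
    refine Finset.sum_eq_zero fun l _ => ?_
    rw [cdet, dif_neg (fun hc => hi hc.1), zero_mul]

end SijAux

open SijAux in
/-- `S_k^{ij}(A) = S_{k−1}(A) δ_{ij} − Σ_l S_{k−1}^{il}(A) a_{jl}`. -/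
theorem Sij_recursion
    (n k : ℕ) (hn : 1 ≤ n) (hk1 : 1 ≤ k) (hkn : k ≤ n)
    (A : Matrix (Fin n) (Fin n) ℝ) (i j : Fin n) :
    Sij n k A i j
      = Smat n (k - 1) A * (if i = j then (1 : ℝ) else 0)
        - ∑ l : Fin n, Sij n (k - 1) A i l * A j l := by
  have hk : k - 1 + 1 = k := Nat.succ_pred_eq_of_pos hk1
  have hrhs : ∑ l : Fin n, Sij n (k - 1) A i l * A j l
      = ∑ s' ∈ Finset.powersetCard (k - 1) (Finset.univ : Finset (Fin n)), rdet A s' i j := by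
    calc ∑ l : Fin n, Sij n (k - 1) A i l * A j l
        = ∑ l : Fin n, ∑ s' ∈ Finset.powersetCard (k - 1) (Finset.univ : Finset (Fin n)),
            cdet A s' i l * A j l := by
          refine Finset.sum_congr rfl fun l _ => ?_
          rw [Sij_eq, Finset.sum_mul]
      _ = ∑ s' ∈ Finset.powersetCard (k - 1) (Finset.univ : Finset (Fin n)),
            ∑ l : Fin n, cdet A s' i l * A j l := Finset.sum_comm
      _ = _ := Finset.sum_congr rfl fun s' _ => row_expand A s' i j
  rw [Sij_eq, hrhs, Smat_eq]
  by_cases hij : i = j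
  · subst hij
    rw [if_pos rfl, mul_one, ← Finset.sum_sub_distrib]
    have hR : ∀ s' ∈ Finset.powersetCard (k - 1) (Finset.univ : Finset (Fin n)),
        dsub A s' - rdet A s' i i = if i ∉ s' then dsub A s' else 0 := by
      intro s' _
      by_cases hi : i ∈ s'
      · rw [if_neg (fun hc => hc hi), rdet_self hi, sub_self]
      · rw [if_pos hi, rdet, dif_neg hi, sub_zero]
    rw [Finset.sum_congr rfl hR, ← Finset.sum_filter]
    have hL : ∀ s ∈ Finset.powersetCard k (Finset.univ : Finset (Fin n)),
        cdet A s i i = if i ∈ s then dsub A (s.erase i) else 0 := by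
      intro s _
      by_cases hi : i ∈ s
      · rw [if_pos hi, cdet_self hi]
      · rw [if_neg hi, cdet, dif_neg (fun hc => hi hc.1)]
    rw [Finset.sum_congr rfl hL, ← Finset.sum_filter]
    refine Finset.sum_bij' (fun s _ => s.erase i) (fun s' _ => insert i s') ?_ ?_ ?_ ?_ ?_
    · intro s hs
      rw [Finset.mem_filter] at hs ⊢
      obtain ⟨hs1, hs2⟩ := hs
      rw [Finset.mem_powersetCard_univ] at hs1 ⊢
      exact ⟨by rw [Finset.card_erase_of_mem hs2, hs1], Finset.notMem_erase i s⟩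
    · intro s' hs'
      rw [Finset.mem_filter] at hs' ⊢
      obtain ⟨hs1, hs2⟩ := hs'
      rw [Finset.mem_powersetCard_univ] at hs1 ⊢
      exact ⟨by rw [Finset.card_insert_of_notMem hs2, hs1, hk],
        Finset.mem_insert_self i s'⟩
    · intro s hs
      exact Finset.insert_erase (Finset.mem_filter.1 hs).2
    · intro s' hs'
      exact Finset.erase_insert (Finset.mem_filter.1 hs').2
    · intro s _
      rfl
  · rw [if_neg hij, mul_zero, zero_sub]
    have hR : ∀ s' ∈ Finset.powersetCard (k - 1) (Finset.univ : Finset (Fin n)),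
        rdet A s' i j = if i ∈ s' ∧ j ∉ s' then rdet A s' i j else 0 := by
      intro s' _
      by_cases h : i ∈ s' ∧ j ∉ s'
      · rw [if_pos h]
      · rw [if_neg h]
        push_neg at h
        by_cases hi : i ∈ s'
        · exact rdet_dup hi (h hi) hij
        · rw [rdet, dif_neg hi]
    have hL : ∀ s ∈ Finset.powersetCard k (Finset.univ : Finset (Fin n)),
        cdet A s i j = if i ∈ s ∧ j ∈ s then -rdet A (s.erase j) i j else 0 := by
      intro s _
      by_cases h : i ∈ s ∧ j ∈ s
      · rw [if_pos h, cdet_swap h.1 h.2 hij]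
      · rw [if_neg h, cdet, dif_neg h]
    rw [Finset.sum_congr rfl hL, ← Finset.sum_filter,
      Finset.sum_congr rfl hR, ← Finset.sum_filter, ← Finset.sum_neg_distrib]
    refine Finset.sum_bij' (fun s _ => s.erase j) (fun s' _ => insert j s') ?_ ?_ ?_ ?_ ?_
    · intro s hs
      rw [Finset.mem_filter] at hs ⊢
      obtain ⟨hs1, hs2⟩ := hs
      rw [Finset.mem_powersetCard_univ] at hs1 ⊢
      exact ⟨by rw [Finset.card_erase_of_mem hs2.2, hs1],
        Finset.mem_erase.2 ⟨hij, hs2.1⟩, Finset.notMem_erase j s⟩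
    · intro s' hs'
      rw [Finset.mem_filter] at hs' ⊢
      obtain ⟨hs1, hs2⟩ := hs'
      rw [Finset.mem_powersetCard_univ] at hs1 ⊢
      exact ⟨by rw [Finset.card_insert_of_notMem hs2.2, hs1, hk],
        Finset.mem_insert_of_mem hs2.1, Finset.mem_insert_self j s'⟩
    · intro s hs
      exact Finset.insert_erase (Finset.mem_filter.1 hs).2.2
    · intro s' hs'
      exact Finset.erase_insert (Finset.mem_filter.1 hs').2.2
    · intro s _
      rfl
end
end

section
/- Let n ≥ 1, let k be an integer with 1 ≤ k ≤ n, let Ω ⊂ ℝⁿ be open, and let u ∈ C³(Ω). Then for each fixed index j, the vector field (S_k^{1j}(D²u), …, S_k^{nj}(D²u)) is divergence free on Ω: Σ_{i=1}^{n} ∂_i ( S_k^{ij}(D²u) ) = 0 at every point of Ω. -/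
open scoped BigOperators

noncomputable section

/-- Partial derivative `∂f/∂x_i`. -/
def pd (n : ℕ) (f : EuclideanSpace ℝ (Fin n) → ℝ) (i : Fin n)
    (x : EuclideanSpace ℝ (Fin n)) : ℝ :=
  fderiv ℝ f x (EuclideanSpace.single i 1)

/-- Hessian matrix of `u`: the `(i,j)` entry is `∂_j ∂_i u`. -/
def hess (n : ℕ) (u : EuclideanSpace ℝ (Fin n) → ℝ) (x : EuclideanSpace ℝ (Fin n)) :
    Matrix (Fin n) (Fin n) ℝ :=
  Matrix.of fun i j => pd n (pd n u i) j x

/-- `w = √(1 + |Du|²)`. -/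
def wFn (n : ℕ) (u : EuclideanSpace ℝ (Fin n) → ℝ) (x : EuclideanSpace ℝ (Fin n)) : ℝ :=
  Real.sqrt (1 + ∑ i, (pd n u i x) ^ 2)

/-- The curvature matrix `A(u)` of the graph of `u`, with entries `a_{ij} = ∂_j (u_i / w)`. -/
def curvMat (n : ℕ) (u : EuclideanSpace ℝ (Fin n) → ℝ) (x : EuclideanSpace ℝ (Fin n)) :
    Matrix (Fin n) (Fin n) ℝ :=
  Matrix.of fun i j => pd n (fun y => pd n u i y / wFn n u y) j x

namespace Skij

variable {n : ℕ}

abbrev Pm (n : ℕ) := Fin n → Fin n → ℝ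

def eb (a b : Fin n) : Pm n := fun p q => if p = a ∧ q = b then 1 else 0

def Msub (s : Finset (Fin n)) (A : Pm n) : Matrix {x // x ∈ s} {x // x ∈ s} ℝ :=
  Matrix.of fun i j => A i j

def ev (s : Finset (Fin n)) (b : Fin n) : {x // x ∈ s} → ℝ :=
  fun j => if (j : Fin n) = b then 1 else 0

def Fp (n k : ℕ) (A : Pm n) : ℝ :=
  ∑ s ∈ Finset.powersetCard k (Finset.univ : Finset (Fin n)), (Msub s A).det

lemma Smat_of (k : ℕ) (A : Pm n) : Smat n k (Matrix.of A) = Fp n k A := rfl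

def Pterm (s : Finset (Fin n)) (A : Pm n) (a b : Fin n) : ℝ :=
  if h : a ∈ s then ((Msub s A).updateRow ⟨a, h⟩ (ev s b)).det else 0

def Rterm (s : Finset (Fin n)) (A : Pm n) (a b c d : Fin n) : ℝ :=
  if h : a ∈ s ∧ c ∈ s then
    (((Msub s A).updateRow ⟨c, h.2⟩ (ev s d)).updateRow ⟨a, h.1⟩ (ev s b)).det
  else 0

lemma det_expand (s : Finset (Fin n)) (A : Pm n) {a c : Fin n} (hac : a ≠ c)
    (b d : Fin n) (t r : ℝ) :
    (Msub s (A + t • eb a b + r • eb c d)).det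
      = (Msub s A).det + t * Pterm s A a b + r * Pterm s A c d
        + t * r * Rterm s A a b c d := by
  by_cases ha : a ∈ s <;> by_cases hc : c ∈ s
  · set M := Msub s A with hMdef
    set a' : {x // x ∈ s} := ⟨a, ha⟩ with ha'
    set c' : {x // x ∈ s} := ⟨c, hc⟩ with hc'
    have hne : a' ≠ c' := fun h => hac (congrArg Subtype.val h)
    have hM : Msub s (A + t • eb a b + r • eb c d)
        = (M.updateRow a' (M a' + t • ev s b)).updateRow c' (M c' + r • ev s d) := by
      funext i q
      have h1 : (i = a') ↔ ((i : Fin n) = a) := Subtype.ext_iff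
      have h2 : (i = c') ↔ ((i : Fin n) = c) := Subtype.ext_iff
      simp only [hMdef, Msub, Matrix.of_apply, Pi.add_apply, Pi.smul_apply, smul_eq_mul,
        Matrix.updateRow_apply, eb, ev, h1, h2]
      split_ifs <;> simp_all <;> ring
    have e1 : ((M.updateRow a' (M a' + t • ev s b)).updateRow c' (M c' + r • ev s d)).det
        = (M.updateRow a' (M a' + t • ev s b)).det
          + r * ((M.updateRow a' (M a' + t • ev s b)).updateRow c' (ev s d)).det := by
      rw [Matrix.det_updateRow_add, Matrix.det_updateRow_smul]
      congr 1
      rw [show M c' = (M.updateRow a' (M a' + t • ev s b)) c' from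
        (Matrix.updateRow_ne hne.symm).symm, Matrix.updateRow_eq_self]
    have e2 : (M.updateRow a' (M a' + t • ev s b)).det
        = M.det + t * (M.updateRow a' (ev s b)).det := by
      rw [Matrix.det_updateRow_add, Matrix.det_updateRow_smul, Matrix.updateRow_eq_self]
    have e3 : (M.updateRow a' (M a' + t • ev s b)).updateRow c' (ev s d)
        = (M.updateRow c' (ev s d)).updateRow a' (M a' + t • ev s b) := by
      funext i q
      simp only [Matrix.updateRow_apply]
      split_ifs <;> simp_all
    have e4 : ((M.updateRow c' (ev s d)).updateRow a' (M a' + t • ev s b)).det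
        = (M.updateRow c' (ev s d)).det
          + t * (((M.updateRow c' (ev s d)).updateRow a' (ev s b))).det := by
      rw [Matrix.det_updateRow_add, Matrix.det_updateRow_smul]
      congr 1
      rw [show M a' = (M.updateRow c' (ev s d)) a' from
        (Matrix.updateRow_ne hne).symm, Matrix.updateRow_eq_self]
    rw [hM, e1, e2, e3, e4, Pterm, Pterm, Rterm, dif_pos ha, dif_pos hc, dif_pos ⟨ha, hc⟩]
    ring
  · set M := Msub s A with hMdef
    set a' : {x // x ∈ s} := ⟨a, ha⟩ with ha'
    have hnc : ∀ i : {x // x ∈ s}, (i : Fin n) ≠ c := fun i h => hc (h ▸ i.2)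
    have hM : Msub s (A + t • eb a b + r • eb c d)
        = M.updateRow a' (M a' + t • ev s b) := by
      funext i q
      have h1 : (i = a') ↔ ((i : Fin n) = a) := Subtype.ext_iff
      simp only [hMdef, Msub, Matrix.of_apply, Pi.add_apply, Pi.smul_apply, smul_eq_mul,
        Matrix.updateRow_apply, eb, ev, h1, hnc i, false_and, if_false]
      split_ifs <;> simp_all <;> ring
    rw [hM, Matrix.det_updateRow_add, Matrix.det_updateRow_smul, Matrix.updateRow_eq_self,
      Pterm, Pterm, Rterm, dif_pos ha, dif_neg hc, dif_neg (fun h => hc h.2)]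
    ring
  · set M := Msub s A with hMdef
    set c' : {x // x ∈ s} := ⟨c, hc⟩ with hc'
    have hna : ∀ i : {x // x ∈ s}, (i : Fin n) ≠ a := fun i h => ha (h ▸ i.2)
    have hM : Msub s (A + t • eb a b + r • eb c d)
        = M.updateRow c' (M c' + r • ev s d) := by
      funext i q
      have h2 : (i = c') ↔ ((i : Fin n) = c) := Subtype.ext_iff
      simp only [hMdef, Msub, Matrix.of_apply, Pi.add_apply, Pi.smul_apply, smul_eq_mul,
        Matrix.updateRow_apply, eb, ev, h2, hna i, false_and, if_false]
      split_ifs <;> simp_all <;> ring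
    rw [hM, Matrix.det_updateRow_add, Matrix.det_updateRow_smul, Matrix.updateRow_eq_self,
      Pterm, Pterm, Rterm, dif_neg ha, dif_pos hc, dif_neg (fun h => ha h.1)]
    ring
  · have hna : ∀ i : {x // x ∈ s}, (i : Fin n) ≠ a := fun i h => ha (h ▸ i.2)
    have hnc : ∀ i : {x // x ∈ s}, (i : Fin n) ≠ c := fun i h => hc (h ▸ i.2)
    have hM : Msub s (A + t • eb a b + r • eb c d) = Msub s A := by
      funext i q
      simp only [Msub, Matrix.of_apply, Pi.add_apply, Pi.smul_apply, smul_eq_mul,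
        eb, hna i, hnc i, false_and, if_false]
      ring
    rw [hM, Pterm, Pterm, Rterm, dif_neg ha, dif_neg hc, dif_neg (fun h => ha h.1)]
    ring

lemma det_expand_diag (s : Finset (Fin n)) (A : Pm n) (a b d : Fin n) (t r : ℝ) :
    (Msub s (A + t • eb a b + r • eb a d)).det
      = (Msub s A).det + t * Pterm s A a b + r * Pterm s A a d := by
  by_cases ha : a ∈ s
  · set M := Msub s A with hMdef
    set a' : {x // x ∈ s} := ⟨a, ha⟩ with ha'
    have hM : Msub s (A + t • eb a b + r • eb a d)
        = M.updateRow a' ((M a' + t • ev s b) + r • ev s d) := by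
      funext i q
      have h1 : (i = a') ↔ ((i : Fin n) = a) := Subtype.ext_iff
      simp only [hMdef, Msub, Matrix.of_apply, Pi.add_apply, Pi.smul_apply, smul_eq_mul,
        Matrix.updateRow_apply, eb, ev, h1]
      split_ifs <;> simp_all <;> ring
    rw [hM, Matrix.det_updateRow_add, Matrix.det_updateRow_add, Matrix.det_updateRow_smul,
      Matrix.det_updateRow_smul, Matrix.updateRow_eq_self,
      Pterm, Pterm, dif_pos ha, dif_pos ha]
  · have hna : ∀ i : {x // x ∈ s}, (i : Fin n) ≠ a := fun i h => ha (h ▸ i.2)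
    have hM : Msub s (A + t • eb a b + r • eb a d) = Msub s A := by
      funext i q
      simp only [Msub, Matrix.of_apply, Pi.add_apply, Pi.smul_apply, smul_eq_mul,
        eb, hna i, false_and, if_false]
      ring
    rw [hM, Pterm, Pterm, dif_neg ha, dif_neg ha]
    ring

lemma Rterm_comm (s : Finset (Fin n)) (A : Pm n) {a c : Fin n} (hac : a ≠ c) (b d : Fin n) :
    Rterm s A a b c d = Rterm s A c d a b := by
  unfold Rterm
  by_cases h : a ∈ s ∧ c ∈ s
  · rw [dif_pos h, dif_pos ⟨h.2, h.1⟩]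
    congr 1
    have hne : (⟨a, h.1⟩ : {x // x ∈ s}) ≠ ⟨c, h.2⟩ := fun hh => hac (congrArg Subtype.val hh)
    funext i q
    simp only [Matrix.updateRow_apply]
    split_ifs <;> simp_all
  · rw [dif_neg h, dif_neg (fun hh => h ⟨hh.2, hh.1⟩)]

lemma Rterm_swap (s : Finset (Fin n)) (A : Pm n) {a c : Fin n} (hac : a ≠ c) (b d : Fin n) :
    Rterm s A a b c d = - Rterm s A a d c b := by
  unfold Rterm
  by_cases h : a ∈ s ∧ c ∈ s
  · rw [dif_pos h, dif_pos h]
    have hne : (⟨a, h.1⟩ : {x // x ∈ s}) ≠ ⟨c, h.2⟩ := fun hh => hac (congrArg Subtype.val hh)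
    have key : ((Msub s A).updateRow ⟨c, h.2⟩ (ev s b)).updateRow ⟨a, h.1⟩ (ev s d)
        = (((Msub s A).updateRow ⟨c, h.2⟩ (ev s d)).updateRow ⟨a, h.1⟩ (ev s b)).submatrix
            (Equiv.swap (⟨a, h.1⟩ : {x // x ∈ s}) ⟨c, h.2⟩) id := by
      funext i q
      simp only [Matrix.submatrix_apply, Matrix.updateRow_apply, Equiv.swap_apply_def, id_eq]
      split_ifs <;> simp_all
    rw [key, Matrix.det_permute, Equiv.Perm.sign_swap hne]
    simp
  · rw [dif_neg h, dif_neg h]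
    ring

def Psum (n k : ℕ) (A : Pm n) (a b : Fin n) : ℝ :=
  ∑ s ∈ Finset.powersetCard k (Finset.univ : Finset (Fin n)), Pterm s A a b

def Rsum (n k : ℕ) (A : Pm n) (a b c d : Fin n) : ℝ :=
  ∑ s ∈ Finset.powersetCard k (Finset.univ : Finset (Fin n)), Rterm s A a b c d

lemma Fp_expand (k : ℕ) (A : Pm n) {a c : Fin n} (hac : a ≠ c) (b d : Fin n) (t r : ℝ) :
    Fp n k (A + t • eb a b + r • eb c d)
      = Fp n k A + t * Psum n k A a b + r * Psum n k A c d + t * r * Rsum n k A a b c d := by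
  rw [Fp, Finset.sum_congr rfl (fun s _ => det_expand s A hac b d t r)]
  simp [Finset.sum_add_distrib, Finset.mul_sum, Fp, Psum, Rsum]

lemma Fp_expand_diag (k : ℕ) (A : Pm n) (a b d : Fin n) (t r : ℝ) :
    Fp n k (A + t • eb a b + r • eb a d)
      = Fp n k A + t * Psum n k A a b + r * Psum n k A a d := by
  rw [Fp, Finset.sum_congr rfl (fun s _ => det_expand_diag s A a b d t r)]
  simp [Finset.sum_add_distrib, Finset.mul_sum, Fp, Psum]

lemma Rsum_comm (k : ℕ) (A : Pm n) {a c : Fin n} (hac : a ≠ c) (b d : Fin n) :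
    Rsum n k A a b c d = Rsum n k A c d a b :=
  Finset.sum_congr rfl fun s _ => Rterm_comm s A hac b d

lemma Rsum_swap (k : ℕ) (A : Pm n) {a c : Fin n} (hac : a ≠ c) (b d : Fin n) :
    Rsum n k A a b c d = - Rsum n k A a d c b := by
  rw [Rsum, Rsum, ← Finset.sum_neg_distrib]
  exact Finset.sum_congr rfl fun s _ => Rterm_swap s A hac b d

lemma contDiff_coord (p q : Fin n) : ContDiff ℝ 2 (fun A : Pm n => A p q) :=
  ((ContinuousLinearMap.proj q : (Fin n → ℝ) →L[ℝ] ℝ).comp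
    (ContinuousLinearMap.proj p : Pm n →L[ℝ] (Fin n → ℝ))).contDiff

lemma contDiff_Fp (k : ℕ) : ContDiff ℝ 2 (Fp n k) := by
  apply ContDiff.sum
  intro s _
  have hdet : (fun A : Pm n => (Msub s A).det)
      = fun A => ∑ σ : Equiv.Perm {x // x ∈ s},
          ((Equiv.Perm.sign σ : ℤ) : ℝ) * ∏ i, A (σ i) i := by
    funext A; rw [Matrix.det_apply']; rfl
  rw [hdet]
  apply ContDiff.sum
  intro σ _
  exact contDiff_const.mul (contDiff_prod fun i _ => contDiff_coord _ _)


lemma hasDerivAt_line (B v : Pm n) : HasDerivAt (fun t : ℝ => B + t • v) v 0 := by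
  simpa using ((hasDerivAt_id (0:ℝ)).smul_const v).const_add B

lemma fderiv_line {F : Pm n → ℝ} (hd : Differentiable ℝ F) (B v : Pm n) :
    deriv (fun t : ℝ => F (B + t • v)) 0 = fderiv ℝ F B v := by
  have h := (hd (B + (0:ℝ) • v)).hasFDerivAt.comp_hasDerivAt 0 (hasDerivAt_line B v)
  simp only [zero_smul, add_zero] at h
  exact h.deriv

lemma extract {F : Pm n → ℝ} (hF : ContDiff ℝ 2 F) (A X Y : Pm n) (Pv Qv Rv : ℝ)
    (h : ∀ t s : ℝ, F (A + t • X + s • Y) = F A + t * Pv + s * Qv + t * s * Rv) :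
    fderiv ℝ (fderiv ℝ F) A Y X = Rv := by
  have hd : Differentiable ℝ F := hF.differentiable (by norm_num)
  have hd1 : Differentiable ℝ (fderiv ℝ F) :=
    (hF.fderiv_right (m := 1) (by norm_num)).differentiable one_ne_zero
  have affine : ∀ (c m : ℝ), HasDerivAt (fun t : ℝ => c + t * m) m 0 := by
    intro c m
    simpa using ((hasDerivAt_id (0:ℝ)).mul_const m).const_add c
  have hφ1 : ∀ s : ℝ, fderiv ℝ F (A + s • Y) X = Pv + s * Rv := by
    intro s
    rw [← fderiv_line hd]
    have funeq : (fun t : ℝ => F (A + s • Y + t • X))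
        = fun t : ℝ => (F A + s * Qv) + t * (Pv + s * Rv) := by
      funext t
      have harg : A + s • Y + t • X = A + t • X + s • Y := by abel
      rw [harg, h t s]; ring
    rw [funeq]
    exact (affine _ _).deriv
  have hc : HasDerivAt (fun s : ℝ => fderiv ℝ F (A + s • Y))
      (fderiv ℝ (fderiv ℝ F) A Y) 0 := by
    have := (hd1 (A + (0:ℝ) • Y)).hasFDerivAt.comp_hasDerivAt 0 (hasDerivAt_line A Y)
    simp only [zero_smul, add_zero] at this
    exact this
  have h2 : HasDerivAt (fun s : ℝ => fderiv ℝ F (A + s • Y) X)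
      (fderiv ℝ (fderiv ℝ F) A Y X) 0 := by
    simpa using hc.clm_apply (hasDerivAt_const (0:ℝ) X)
  have h3 : HasDerivAt (fun s : ℝ => fderiv ℝ F (A + s • Y) X) Rv 0 := by
    have heq : (fun s : ℝ => fderiv ℝ F (A + s • Y) X) = fun s => Pv + s * Rv := funext hφ1
    rw [heq]; exact affine _ _
  exact h2.unique h3

lemma D2_eb (k : ℕ) (A : Pm n) {i p : Fin n} (hip : i ≠ p) (j q : Fin n) :
    fderiv ℝ (fderiv ℝ (Fp n k)) A (eb p q) (eb i j) = Rsum n k A i j p q :=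
  extract (contDiff_Fp k) A (eb i j) (eb p q) _ _ _
    (fun t s => Fp_expand k A hip j q t s)

lemma D2_eb_diag (k : ℕ) (A : Pm n) (i j q : Fin n) :
    fderiv ℝ (fderiv ℝ (Fp n k)) A (eb i q) (eb i j) = 0 :=
  extract (contDiff_Fp k) A (eb i j) (eb i q) (Psum n k A i j) (Psum n k A i q) 0
    (fun t s => by rw [Fp_expand_diag k A i j q t s]; ring)

lemma eb_decomp (B : Pm n) : B = ∑ p : Fin n, ∑ q : Fin n, B p q • eb p q := by
  funext x y
  simp only [Finset.sum_apply, Pi.smul_apply, smul_eq_mul, eb]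
  simp [ite_and, mul_ite]

lemma D2_apply_sum (k : ℕ) (A M E : Pm n) :
    fderiv ℝ (fderiv ℝ (Fp n k)) A M E
      = ∑ p : Fin n, ∑ q : Fin n,
          M p q * fderiv ℝ (fderiv ℝ (Fp n k)) A (eb p q) E := by
  conv_lhs => rw [eb_decomp M, map_sum]
  rw [ContinuousLinearMap.sum_apply]
  refine Finset.sum_congr rfl fun p _ => ?_
  rw [map_sum, ContinuousLinearMap.sum_apply]
  refine Finset.sum_congr rfl fun q _ => ?_
  rw [map_smul, ContinuousLinearMap.smul_apply, smul_eq_mul]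

lemma pd_symm {Ω : Set (EuclideanSpace ℝ (Fin n))} (hopen : IsOpen Ω)
    {f : EuclideanSpace ℝ (Fin n) → ℝ} (hf : ContDiffOn ℝ 2 f Ω)
    {x : EuclideanSpace ℝ (Fin n)} (hx : x ∈ Ω) (a b : Fin n) :
    pd n (pd n f a) b x = pd n (pd n f b) a x := by
  have hAt : ContDiffAt ℝ 2 f x := hf.contDiffAt (hopen.mem_nhds hx)
  have hsymm := hAt.isSymmSndFDerivAt (by simp)
  have hdf : DifferentiableAt ℝ (fderiv ℝ f) x :=
    (hAt.fderiv_right (m := 1) (by norm_num)).differentiableAt (by norm_num)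
  have key : ∀ v w : EuclideanSpace ℝ (Fin n),
      fderiv ℝ (fun y => fderiv ℝ f y v) x w = fderiv ℝ (fderiv ℝ f) x w v := by
    intro v w
    rw [fderiv_clm_apply hdf (differentiableAt_const v)]
    simp
  show fderiv ℝ (fun y => fderiv ℝ f y (EuclideanSpace.single a 1)) x
      (EuclideanSpace.single b 1)
    = fderiv ℝ (fun y => fderiv ℝ f y (EuclideanSpace.single b 1)) x
      (EuclideanSpace.single a 1)
  rw [key, key, hsymm]


lemma Sij_eq (k : ℕ) (B : Pm n) (i j : Fin n) :
    Sij n k (Matrix.of B) i j = fderiv ℝ (Fp n k) B (eb i j) := by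
  have harg : ∀ t : ℝ, Matrix.of B + t • Matrix.single i j (1:ℝ)
      = Matrix.of (B + t • eb i j) := by
    intro t
    ext p q
    simp only [Matrix.add_apply, Matrix.smul_apply, Matrix.of_apply, Pi.add_apply,
      Pi.smul_apply, smul_eq_mul, Matrix.single, eb]
    by_cases h1 : p = i <;> by_cases h2 : q = j <;>
      simp [h1, h2, eq_comm (a := i) (b := p), eq_comm (a := j) (b := q)]
  unfold Sij
  simp_rw [harg, Smat_of]
  exact fderiv_line ((contDiff_Fp k).differentiable (by norm_num)) B (eb i j)

lemma sum_antisym {g : Fin n → Fin n → ℝ} (h : ∀ i p, g i p + g p i = 0) :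
    ∑ i : Fin n, ∑ p : Fin n, g i p = 0 := by
  have h1 : (∑ i : Fin n, ∑ p : Fin n, g i p) + (∑ i : Fin n, ∑ p : Fin n, g p i) = 0 := by
    rw [← Finset.sum_add_distrib]
    refine Finset.sum_eq_zero fun i _ => ?_
    rw [← Finset.sum_add_distrib]
    exact Finset.sum_eq_zero fun p _ => h i p
  have h2 : (∑ i : Fin n, ∑ p : Fin n, g p i) = ∑ i : Fin n, ∑ p : Fin n, g i p :=
    Finset.sum_comm
  linarith

end Skij



/-- For `u ∈ C³(Ω)` and each fixed `j`, the vector field `(S_k^{1j}(D²u), …, S_k^{nj}(D²u))`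
is divergence free on the open set `Ω`. -/
theorem Skij_hessian_divergence_free
    (n k : ℕ) (hn : 1 ≤ n) (hk1 : 1 ≤ k) (hkn : k ≤ n)
    (Ω : Set (EuclideanSpace ℝ (Fin n))) (hopen : IsOpen Ω)
    (u : EuclideanSpace ℝ (Fin n) → ℝ) (hu : ContDiffOn ℝ 3 u Ω) (j : Fin n) :
    ∀ x ∈ Ω, ∑ i : Fin n, pd n (fun y => Sij n k (hess n u y) i j) i x = 0 := by
  classical
  intro x hx
  have hfd1 : ContDiffOn ℝ 2 (fderiv ℝ u) Ω := hu.fderiv_of_isOpen hopen (by norm_num)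
  have hpd1 : ∀ p : Fin n, ContDiffOn ℝ 2 (pd n u p) Ω := fun p =>
    hfd1.clm_apply contDiffOn_const
  have hfd2 : ∀ p : Fin n, ContDiffOn ℝ 1 (fderiv ℝ (pd n u p)) Ω := fun p =>
    (hpd1 p).fderiv_of_isOpen hopen (by norm_num)
  have hent : ∀ p q : Fin n, ContDiffOn ℝ 1 (fun y => pd n (pd n u p) q y) Ω := fun p q =>
    (hfd2 p).clm_apply contDiffOn_const
  have hentd : ∀ p q : Fin n, DifferentiableAt ℝ (fun y => pd n (pd n u p) q y) x := fun p q =>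
    ((hent p q).differentiableOn one_ne_zero).differentiableAt (hopen.mem_nhds hx)
  set hmap : EuclideanSpace ℝ (Fin n) → Skij.Pm n :=
    fun y => fun p q => pd n (pd n u p) q y with hhmap
  set A : Skij.Pm n := hmap x with hA
  set T : Fin n → Fin n → Fin n → ℝ :=
    fun p q i => pd n (fun y => pd n (pd n u p) q y) i x with hT
  have hmapdiff : DifferentiableAt ℝ hmap x := by
    rw [hhmap, differentiableAt_pi]
    intro p
    rw [differentiableAt_pi]
    intro q
    exact hentd p q
  set H := fderiv ℝ hmap x with hH
  have hHapply : ∀ v : EuclideanSpace ℝ (Fin n), ∀ p q : Fin n,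
      H v p q = fderiv ℝ (fun y => pd n (pd n u p) q y) x v := by
    intro v p q
    have hφ : ∀ p : Fin n,
        DifferentiableAt ℝ (fun y => (fun q => pd n (pd n u p) q y)) x := by
      intro p; rw [differentiableAt_pi]; intro q; exact hentd p q
    rw [hH, hhmap, fderiv_pi hφ, ContinuousLinearMap.pi_apply,
      fderiv_pi (fun q => hentd p q), ContinuousLinearMap.pi_apply]
  have hd1 : Differentiable ℝ (fderiv ℝ (Skij.Fp n k)) :=
    ((Skij.contDiff_Fp (n := n) k).fderiv_right (m := 1) (by norm_num)).differentiable one_ne_zero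
  have hterm : ∀ i : Fin n,
      pd n (fun y => Sij n k (hess n u y) i j) i x
        = fderiv ℝ (fderiv ℝ (Skij.Fp n k)) A (H (EuclideanSpace.single i 1))
            (Skij.eb i j) := by
    intro i
    have hfun : (fun y => Sij n k (hess n u y) i j)
        = fun y => fderiv ℝ (Skij.Fp n k) (hmap y) (Skij.eb i j) := by
      funext y
      exact Skij.Sij_eq k (hmap y) i j
    have hcomp : HasFDerivAt (fun y => fderiv ℝ (Skij.Fp n k) (hmap y))
        ((fderiv ℝ (fderiv ℝ (Skij.Fp n k)) A).comp H) x :=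
      (hd1 A).hasFDerivAt.comp x hmapdiff.hasFDerivAt
    have hdd := (hcomp.clm_apply (hasFDerivAt_const (Skij.eb i j) x)).fderiv
    show fderiv ℝ (fun y => Sij n k (hess n u y) i j) x (EuclideanSpace.single i 1) = _
    rw [hfun, hdd]
    simp
  have hTsym : ∀ p q i : Fin n, T p q i = T i q p := by
    intro p q i
    have huC2 : ContDiffOn ℝ 2 u Ω := hu.of_le (by norm_num)
    have step1 : (fun y => pd n (pd n u p) q y) =ᶠ[nhds x] (fun y => pd n (pd n u q) p y) :=
      Filter.eventuallyEq_of_mem (hopen.mem_nhds hx)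
        (fun y hy => Skij.pd_symm hopen huC2 hy p q)
    have step3 : (fun y => pd n (pd n u q) i y) =ᶠ[nhds x] (fun y => pd n (pd n u i) q y) :=
      Filter.eventuallyEq_of_mem (hopen.mem_nhds hx)
        (fun y hy => Skij.pd_symm hopen huC2 hy q i)
    have e1 : T p q i = pd n (fun y => pd n (pd n u q) p y) i x := by
      rw [hT]
      show fderiv ℝ _ x _ = fderiv ℝ _ x _
      rw [step1.fderiv_eq]
    have e2 : pd n (fun y => pd n (pd n u q) p y) i x
        = pd n (fun y => pd n (pd n u q) i y) p x :=
      Skij.pd_symm hopen (hpd1 q) hx p i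
    have e3 : pd n (fun y => pd n (pd n u q) i y) p x = T i q p := by
      rw [hT]
      show fderiv ℝ _ x _ = fderiv ℝ _ x _
      rw [step3.fderiv_eq]
    rw [e1, e2, e3]
  have main : ∑ i : Fin n, pd n (fun y => Sij n k (hess n u y) i j) i x
      = ∑ i : Fin n, ∑ p : Fin n, ∑ q : Fin n,
          T p q i * fderiv ℝ (fderiv ℝ (Skij.Fp n k)) A (Skij.eb p q) (Skij.eb i j) := by
    refine Finset.sum_congr rfl fun i _ => ?_
    rw [hterm i, Skij.D2_apply_sum]
    refine Finset.sum_congr rfl fun p _ => Finset.sum_congr rfl fun q _ => ?_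
    rw [hHapply]
    rfl
  rw [main]
  apply Skij.sum_antisym
  intro i p
  rw [← Finset.sum_add_distrib]
  refine Finset.sum_eq_zero fun q _ => ?_
  rcases eq_or_ne i p with rfl | hip
  · simp [Skij.D2_eb_diag k A i j q]
  · have h1 : fderiv ℝ (fderiv ℝ (Skij.Fp n k)) A (Skij.eb p q) (Skij.eb i j)
        = Skij.Rsum n k A i j p q := Skij.D2_eb k A hip j q
    have h2 : fderiv ℝ (fderiv ℝ (Skij.Fp n k)) A (Skij.eb i q) (Skij.eb p j)
        = Skij.Rsum n k A p j i q := Skij.D2_eb k A hip.symm j q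
    have h3 : Skij.Rsum n k A p j i q = - Skij.Rsum n k A i j p q := by
      rw [Skij.Rsum_comm k A hip.symm j q]
      have := Skij.Rsum_swap k A hip j q
      linarith
    rw [h1, h2, h3, ← hTsym p q i]
    ring
end
end

section
/- Let n ≥ 1, let k be an integer with 1 ≤ k ≤ n, let Ω ⊂ ℝⁿ be open, and let u ∈ C³(Ω). Let A(u) be the curvature matrix of the graph of u, with entries a_{ij} = ∂_j(u_i/w) where w = √(1+|Du|²). Then for each fixed index i, Σ_{j=1}^{n} ∂_j ( S_k^{ij}(A(u)) ) = 0 at every point of Ω. -/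
open scoped BigOperators

noncomputable section

/-! ### Auxiliary lemmas -/

lemma Smat_eq (n k : ℕ) (A : Matrix (Fin n) (Fin n) ℝ) :
    Smat n k A = ∑ T ∈ Finset.powersetCard k (Finset.univ : Finset (Fin n)),
      ∑ σ : Equiv.Perm {a // a ∈ T},
        ((Equiv.Perm.sign σ : ℤ) : ℝ) * ∏ t : {a // a ∈ T}, A (t : Fin n) ((σ t : Fin n)) := by
  unfold Smat
  refine Finset.sum_congr rfl fun T _ => ?_
  rw [← Matrix.det_transpose, Matrix.det_apply']
  refine Finset.sum_congr rfl fun σ _ => ?_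
  simp [Matrix.transpose_apply, Matrix.submatrix_apply]

lemma Sij_eq (n k : ℕ) (A : Matrix (Fin n) (Fin n) ℝ) (i j : Fin n) :
    Sij n k A i j = ∑ T ∈ Finset.powersetCard k (Finset.univ : Finset (Fin n)),
      ∑ σ : Equiv.Perm {a // a ∈ T},
        ((Equiv.Perm.sign σ : ℤ) : ℝ) *
          ∑ r : {a // a ∈ T},
            (∏ t ∈ Finset.univ.erase r, A (t : Fin n) ((σ t : Fin n))) *
              (if i = (r : Fin n) ∧ j = ((σ r : Fin n)) then 1 else 0) := by
  unfold Sij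
  have hfun : (fun t : ℝ => Smat n k (A + t • Matrix.single i j (1:ℝ)))
      = fun t : ℝ => ∑ T ∈ Finset.powersetCard k (Finset.univ : Finset (Fin n)),
          ∑ σ : Equiv.Perm {a // a ∈ T},
            ((Equiv.Perm.sign σ : ℤ) : ℝ) *
              ∏ r : {a // a ∈ T},
                (A (r : Fin n) ((σ r : Fin n)) +
                  t * (if i = (r : Fin n) ∧ j = ((σ r : Fin n)) then 1 else 0)) := by
    funext t
    rw [Smat_eq]
    refine Finset.sum_congr rfl fun T _ => Finset.sum_congr rfl fun σ _ => ?_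
    simp [Matrix.add_apply, Matrix.smul_apply, Matrix.single, smul_eq_mul, mul_ite]
  rw [hfun]
  have H : HasDerivAt (fun t : ℝ => ∑ T ∈ Finset.powersetCard k (Finset.univ : Finset (Fin n)),
      ∑ σ : Equiv.Perm {a // a ∈ T},
        ((Equiv.Perm.sign σ : ℤ) : ℝ) *
          ∏ r : {a // a ∈ T},
            (A (r : Fin n) ((σ r : Fin n)) +
              t * (if i = (r : Fin n) ∧ j = ((σ r : Fin n)) then 1 else 0)))
      (∑ T ∈ Finset.powersetCard k (Finset.univ : Finset (Fin n)),
        ∑ σ : Equiv.Perm {a // a ∈ T},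
          ((Equiv.Perm.sign σ : ℤ) : ℝ) *
            ∑ r : {a // a ∈ T},
              (∏ t ∈ Finset.univ.erase r, A (t : Fin n) ((σ t : Fin n))) *
                (if i = (r : Fin n) ∧ j = ((σ r : Fin n)) then 1 else 0)) 0 := by
    apply HasDerivAt.fun_sum
    intro T _
    apply HasDerivAt.fun_sum
    intro σ _
    apply HasDerivAt.const_mul
    have := HasDerivAt.fun_finsetProd (u := (Finset.univ : Finset {a // a ∈ T}))
      (f := fun r (t : ℝ) => A (r : Fin n) ((σ r : Fin n)) +
        t * (if i = (r : Fin n) ∧ j = ((σ r : Fin n)) then 1 else 0))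
      (f' := fun r => (if i = (r : Fin n) ∧ j = ((σ r : Fin n)) then 1 else 0))
      (x := 0) ?_
    · convert this using 1
      refine Finset.sum_congr rfl fun r _ => ?_
      simp [smul_eq_mul]
    · intro r _
      simpa using ((hasDerivAt_id (0:ℝ)).const_mul
        (if i = (r : Fin n) ∧ j = ((σ r : Fin n)) then (1:ℝ) else 0)).const_add
        (A (r : Fin n) ((σ r : Fin n)))
  exact H.deriv

lemma pd_pd_eq {n : ℕ} (f : EuclideanSpace ℝ (Fin n) → ℝ) (x : EuclideanSpace ℝ (Fin n))
    (hf : ContDiffAt ℝ 2 f x) (s j : Fin n) :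
    pd n (fun y => pd n f s y) j x
      = fderiv ℝ (fderiv ℝ f) x (EuclideanSpace.single j 1) (EuclideanSpace.single s 1) := by
  have hdf : DifferentiableAt ℝ (fderiv ℝ f) x :=
    (hf.fderiv_right (by norm_num : (1:WithTop ℕ∞)+1 ≤ 2)).differentiableAt one_ne_zero
  have hL : HasFDerivAt (fun y => fderiv ℝ f y (EuclideanSpace.single s 1))
      ((ContinuousLinearMap.apply ℝ ℝ (EuclideanSpace.single s 1)).comp
        (fderiv ℝ (fderiv ℝ f) x)) x :=
    by exact
      (ContinuousLinearMap.apply ℝ ℝ (EuclideanSpace.single s 1)).hasFDerivAt.comp x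
        hdf.hasFDerivAt
  have : pd n (fun y => pd n f s y) j x
      = ((ContinuousLinearMap.apply ℝ ℝ (EuclideanSpace.single s 1)).comp
        (fderiv ℝ (fderiv ℝ f) x)) (EuclideanSpace.single j 1) := by
    simp only [pd]; rw [hL.fderiv]
  simpa using this

lemma pd_symm {n : ℕ} (f : EuclideanSpace ℝ (Fin n) → ℝ) (x : EuclideanSpace ℝ (Fin n))
    (hf : ContDiffAt ℝ 2 f x) (s j : Fin n) :
    pd n (fun y => pd n f s y) j x = pd n (fun y => pd n f j y) s x := by
  rw [pd_pd_eq f x hf s j, pd_pd_eq f x hf j s]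
  exact hf.isSymmSndFDerivAt (by simp) _ _

lemma contDiffAt_pd {n : ℕ} (f : EuclideanSpace ℝ (Fin n) → ℝ) (x : EuclideanSpace ℝ (Fin n))
    (m : WithTop ℕ∞) (hf : ContDiffAt ℝ (m + 1) f x) (r : Fin n) :
    ContDiffAt ℝ m (fun y => pd n f r y) x :=
  (hf.fderiv_right le_rfl).clm_apply contDiffAt_const

lemma contDiffAt_wFn {n : ℕ} (u : EuclideanSpace ℝ (Fin n) → ℝ) (x : EuclideanSpace ℝ (Fin n))
    (m : WithTop ℕ∞) (hu : ContDiffAt ℝ (m + 1) u x) :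
    ContDiffAt ℝ m (wFn n u) x := by
  have hg : ContDiffAt ℝ m (fun y => 1 + ∑ i, (pd n u i y) ^ 2) x := by
    refine contDiffAt_const.add ?_
    exact ContDiffAt.sum fun i _ => (contDiffAt_pd u x m hu i).pow 2
  have hpos : (0:ℝ) < 1 + ∑ i, (pd n u i x) ^ 2 := by positivity
  exact (Real.contDiffAt_sqrt (ne_of_gt hpos)).comp x hg

lemma wFn_pos {n : ℕ} (u : EuclideanSpace ℝ (Fin n) → ℝ) (y : EuclideanSpace ℝ (Fin n)) :
    0 < wFn n u y := by
  have : (0:ℝ) < 1 + ∑ i, (pd n u i y) ^ 2 := by positivity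
  exact Real.sqrt_pos.mpr this

lemma perm_sum_zero {α : Type*} [DecidableEq α] [Fintype α] (r t' : α) (hne : t' ≠ r)
    (F : Equiv.Perm α → ℝ) (hF : ∀ σ, F (σ * Equiv.swap r t') = - F σ) :
    ∑ σ : Equiv.Perm α, F σ = 0 := by
  have h1 : ∑ σ : Equiv.Perm α, F (σ * Equiv.swap r t') = ∑ σ : Equiv.Perm α, F σ :=
    Equiv.sum_comp (Equiv.mulRight (Equiv.swap r t')) F
  have h2 : ∑ σ : Equiv.Perm α, F (σ * Equiv.swap r t') = -∑ σ : Equiv.Perm α, F σ := by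
    rw [Finset.sum_congr rfl fun σ _ => hF σ, Finset.sum_neg_distrib]
  have := h1.symm.trans h2
  linarith

lemma collapse_ind {m : ℕ} (P : Prop) [Decidable P] (j0 : Fin m) (W : Fin m → ℝ) :
    ∑ j : Fin m, (if P ∧ j = j0 then 1 else 0) * W j = (if P then 1 else 0) * W j0 := by
  by_cases hP : P <;> simp [hP]

lemma alg_cancel {n : ℕ} (i : Fin n) (PS : Finset (Finset (Fin n)))
    (c : Fin n → Fin n → ℝ) (p : Fin n → Fin n → Fin n → ℝ)
    (hp : ∀ r s j, p r s j = p r j s) :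
    ∑ j : Fin n, ∑ T ∈ PS, ∑ σ : Equiv.Perm {a // a ∈ T},
      ((Equiv.Perm.sign σ : ℤ) : ℝ) *
        ∑ r : {a // a ∈ T},
          (if i = (r : Fin n) ∧ j = ((σ r : Fin n)) then 1 else 0) *
            ∑ t' ∈ Finset.univ.erase r,
              (∏ t ∈ (Finset.univ.erase r).erase t', c (t : Fin n) ((σ t : Fin n))) *
                p (t' : Fin n) ((σ t' : Fin n)) j = 0 := by
  classical
  rw [Finset.sum_comm]
  apply Finset.sum_eq_zero
  intro T _
  calc
    ∑ j : Fin n, ∑ σ : Equiv.Perm {a // a ∈ T},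
      ((Equiv.Perm.sign σ : ℤ) : ℝ) *
        ∑ r : {a // a ∈ T},
          (if i = (r : Fin n) ∧ j = ((σ r : Fin n)) then 1 else 0) *
            ∑ t' ∈ Finset.univ.erase r,
              (∏ t ∈ (Finset.univ.erase r).erase t', c (t : Fin n) ((σ t : Fin n))) *
                p (t' : Fin n) ((σ t' : Fin n)) j
      = ∑ σ : Equiv.Perm {a // a ∈ T}, ∑ r : {a // a ∈ T}, ∑ j : Fin n,
          (if i = (r : Fin n) ∧ j = ((σ r : Fin n)) then 1 else 0) *
            (((Equiv.Perm.sign σ : ℤ) : ℝ) *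
              ∑ t' ∈ Finset.univ.erase r,
                (∏ t ∈ (Finset.univ.erase r).erase t', c (t : Fin n) ((σ t : Fin n))) *
                  p (t' : Fin n) ((σ t' : Fin n)) j) := by
        rw [Finset.sum_comm]
        refine Finset.sum_congr rfl fun σ _ => ?_
        rw [← Finset.sum_comm]
        refine Finset.sum_congr rfl fun j _ => ?_
        rw [Finset.mul_sum]
        refine Finset.sum_congr rfl fun r _ => ?_
        ring
    _ = ∑ σ : Equiv.Perm {a // a ∈ T}, ∑ r : {a // a ∈ T},
          (if i = (r : Fin n) then 1 else 0) *
            (((Equiv.Perm.sign σ : ℤ) : ℝ) *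
              ∑ t' ∈ Finset.univ.erase r,
                (∏ t ∈ (Finset.univ.erase r).erase t', c (t : Fin n) ((σ t : Fin n))) *
                  p (t' : Fin n) ((σ t' : Fin n)) ((σ r : Fin n))) := by
        refine Finset.sum_congr rfl fun σ _ => Finset.sum_congr rfl fun r _ => ?_
        exact collapse_ind (i = (r : Fin n)) ((σ r : Fin n)) _
    _ = ∑ r : {a // a ∈ T}, ∑ t' ∈ Finset.univ.erase r, ∑ σ : Equiv.Perm {a // a ∈ T},
          (if i = (r : Fin n) then 1 else 0) *
            (((Equiv.Perm.sign σ : ℤ) : ℝ) *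
              ((∏ t ∈ (Finset.univ.erase r).erase t', c (t : Fin n) ((σ t : Fin n))) *
                  p (t' : Fin n) ((σ t' : Fin n)) ((σ r : Fin n)))) := by
        rw [Finset.sum_comm]
        refine Finset.sum_congr rfl fun r _ => ?_
        refine (Finset.sum_congr rfl fun σ _ => ?_).trans Finset.sum_comm
        rw [Finset.mul_sum, Finset.mul_sum]
    _ = 0 := by
        apply Finset.sum_eq_zero
        intro r _
        apply Finset.sum_eq_zero
        intro t' ht'
        have hne : t' ≠ r := (Finset.mem_erase.mp ht').1
        apply perm_sum_zero r t' hne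
        intro σ
        have hsign : (((Equiv.Perm.sign (σ * Equiv.swap r t') : ℤ)) : ℝ)
            = -((Equiv.Perm.sign σ : ℤ) : ℝ) := by
          rw [Equiv.Perm.sign_mul, Equiv.Perm.sign_swap (Ne.symm hne)]
          push_cast
          ring
        have hprod : (∏ t ∈ (Finset.univ.erase r).erase t',
              c (t : Fin n) (((σ * Equiv.swap r t') t : Fin n)))
            = ∏ t ∈ (Finset.univ.erase r).erase t', c (t : Fin n) ((σ t : Fin n)) := by
          refine Finset.prod_congr rfl fun t ht => ?_
          have h1 : t ≠ t' := (Finset.mem_erase.mp ht).1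
          have h2 : t ≠ r := (Finset.mem_erase.mp (Finset.mem_erase.mp ht).2).1
          rw [Equiv.Perm.mul_apply, Equiv.swap_apply_of_ne_of_ne h2 h1]
        have ht'v : (σ * Equiv.swap r t') t' = σ r := by
          rw [Equiv.Perm.mul_apply, Equiv.swap_apply_right]
        have hrv : (σ * Equiv.swap r t') r = σ t' := by
          rw [Equiv.Perm.mul_apply, Equiv.swap_apply_left]
        rw [hsign, hprod, ht'v, hrv, hp]
        ring

/-- For `u ∈ C³(Ω)` and each fixed `i`, the vector field `(S_k^{i1}(A(u)), …, S_k^{in}(A(u)))`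
built from the curvature matrix of the graph of `u` is divergence free on the open set `Ω`. -/
theorem Skij_curvature_divergence_free
    (n k : ℕ) (hn : 1 ≤ n) (hk1 : 1 ≤ k) (hkn : k ≤ n)
    (Ω : Set (EuclideanSpace ℝ (Fin n))) (hopen : IsOpen Ω)
    (u : EuclideanSpace ℝ (Fin n) → ℝ) (hu : ContDiffOn ℝ 3 u Ω) (i : Fin n) :
    ∀ x ∈ Ω, ∑ j : Fin n, pd n (fun y => Sij n k (curvMat n u y) i j) j x = 0 := by
  intro x hx
  classical
  have hu3 : ContDiffAt ℝ ((2:WithTop ℕ∞) + 1) u x := by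
    have h := hu.contDiffAt (hopen.mem_nhds hx)
    norm_num at h ⊢
    exact h
  have hv2 : ∀ r : Fin n, ContDiffAt ℝ 2 (fun y => pd n u r y / wFn n u y) x := fun r =>
    (contDiffAt_pd u x 2 hu3 r).div (contDiffAt_wFn u x 2 hu3) (ne_of_gt (wFn_pos u x))
  have haD : ∀ r s : Fin n, DifferentiableAt ℝ (fun y => curvMat n u y r s) x := by
    intro r s
    have h2 : ContDiffAt ℝ ((1:WithTop ℕ∞) + 1) (fun y => pd n u r y / wFn n u y) x := by
      have := hv2 r; norm_num at this ⊢; exact this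
    have := contDiffAt_pd (fun y => pd n u r y / wFn n u y) x 1 h2 s
    exact this.differentiableAt one_ne_zero
  have hsymm : ∀ r s j : Fin n,
      pd n (fun y => curvMat n u y r s) j x = pd n (fun y => curvMat n u y r j) s x := by
    intro r s j
    exact pd_symm (fun y => pd n u r y / wFn n u y) x (hv2 r) s j
  have hpd_eq : ∀ j : Fin n, pd n (fun y => Sij n k (curvMat n u y) i j) j x
      = ∑ T ∈ Finset.powersetCard k (Finset.univ : Finset (Fin n)),
          ∑ σ : Equiv.Perm {a // a ∈ T},
            ((Equiv.Perm.sign σ : ℤ) : ℝ) *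
              ∑ r : {a // a ∈ T},
                (if i = (r : Fin n) ∧ j = ((σ r : Fin n)) then 1 else 0) *
                  ∑ t' ∈ Finset.univ.erase r,
                    (∏ t ∈ (Finset.univ.erase r).erase t',
                      curvMat n u x (t : Fin n) ((σ t : Fin n))) *
                      pd n (fun y => curvMat n u y (t' : Fin n) ((σ t' : Fin n))) j x := by
    intro j
    have hrw : (fun y => Sij n k (curvMat n u y) i j)
        = fun y => ∑ T ∈ Finset.powersetCard k (Finset.univ : Finset (Fin n)),
            ∑ σ : Equiv.Perm {a // a ∈ T},
              ((Equiv.Perm.sign σ : ℤ) : ℝ) *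
                ∑ r : {a // a ∈ T},
                  (∏ t ∈ Finset.univ.erase r, curvMat n u y (t : Fin n) ((σ t : Fin n))) *
                    (if i = (r : Fin n) ∧ j = ((σ r : Fin n)) then 1 else 0) := by
      funext y
      exact Sij_eq n k (curvMat n u y) i j
    have hder : HasFDerivAt
        (fun y => ∑ T ∈ Finset.powersetCard k (Finset.univ : Finset (Fin n)),
            ∑ σ : Equiv.Perm {a // a ∈ T},
              ((Equiv.Perm.sign σ : ℤ) : ℝ) *
                ∑ r : {a // a ∈ T},
                  (∏ t ∈ Finset.univ.erase r, curvMat n u y (t : Fin n) ((σ t : Fin n))) *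
                    (if i = (r : Fin n) ∧ j = ((σ r : Fin n)) then 1 else 0))
        (∑ T ∈ Finset.powersetCard k (Finset.univ : Finset (Fin n)),
            ∑ σ : Equiv.Perm {a // a ∈ T},
              ((Equiv.Perm.sign σ : ℤ) : ℝ) •
                ∑ r : {a // a ∈ T},
                  (if i = (r : Fin n) ∧ j = ((σ r : Fin n)) then (1:ℝ) else 0) •
                    ∑ t' ∈ Finset.univ.erase r,
                      (∏ t ∈ (Finset.univ.erase r).erase t',
                        curvMat n u x (t : Fin n) ((σ t : Fin n))) •
                        fderiv ℝ (fun y => curvMat n u y (t' : Fin n) ((σ t' : Fin n))) x) x := by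
      apply HasFDerivAt.fun_sum
      intro T _
      apply HasFDerivAt.fun_sum
      intro σ _
      apply HasFDerivAt.const_mul
      apply HasFDerivAt.fun_sum
      intro r _
      apply HasFDerivAt.mul_const
      exact HasFDerivAt.finset_prod fun t' _ =>
        (haD (t' : Fin n) ((σ t' : Fin n))).hasFDerivAt
    rw [hrw]
    show fderiv ℝ _ x (EuclideanSpace.single j 1) = _
    rw [hder.fderiv]
    simp only [ContinuousLinearMap.coe_sum', Finset.sum_apply,
      ContinuousLinearMap.coe_smul', Pi.smul_apply, smul_eq_mul, pd]
  calc
    ∑ j : Fin n, pd n (fun y => Sij n k (curvMat n u y) i j) j x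
      = ∑ j : Fin n, ∑ T ∈ Finset.powersetCard k (Finset.univ : Finset (Fin n)),
          ∑ σ : Equiv.Perm {a // a ∈ T},
            ((Equiv.Perm.sign σ : ℤ) : ℝ) *
              ∑ r : {a // a ∈ T},
                (if i = (r : Fin n) ∧ j = ((σ r : Fin n)) then 1 else 0) *
                  ∑ t' ∈ Finset.univ.erase r,
                    (∏ t ∈ (Finset.univ.erase r).erase t',
                      curvMat n u x (t : Fin n) ((σ t : Fin n))) *
                      pd n (fun y => curvMat n u y (t' : Fin n) ((σ t' : Fin n))) j x :=
        Finset.sum_congr rfl fun j _ => hpd_eq j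
    _ = 0 := alg_cancel i _ (fun r s => curvMat n u x r s)
        (fun r s j => pd n (fun y => curvMat n u y r s) j x) hsymm
end
end
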